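/- arXiv:math/0009018 — 6 statements merged into one kernel-verified Lean document; each statement's English description precedes it below -/
import Mathlib

section
/- Suppose that for every λ < 0 the functions x ↦ e^{λ r_j(x)}, j = 0, 1, …, k, are linearly independent as functions on I (i.e., if c_0, c_1, …, c_k are reals with Σ_{j=0}^k c_j e^{λ r_j(x)} = 0 for all x ∈ I, then all c_j = 0). Then the degeneracy condition does not hold at any D ∈ (0, D_max). -/
open Real MeasureTheory Finset
open scoped Classical

/-- `Q` is a probability mass function on `Fin k`. -/
def IsPmf {k : ℕ} (Q : Fin k → ℝ) : Prop := (∀ j, 0 ≤ Q j) ∧ ∑ j, Q j = 1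

/-- `Λ_{P,Q}(λ) = E_P[ln Σ_j Q_j e^{λ ρ(X,a_j)}]`. -/
noncomputable def Lam {k : ℕ} (P : Measure ℝ) (ρ : ℝ → Fin k → ℝ)
    (Q : Fin k → ℝ) (l : ℝ) : ℝ :=
  ∫ x, Real.log (∑ j, Q j * Real.exp (l * ρ x j)) ∂P

/-- The cost `∫ Σ_j W(x)({a_j}) log₂ (W(x)({a_j}) / Q_j) dP(x)` of a Markov kernel,
with the conventions `0 · log 0 = 0` (automatic in Lean) and value `⊤` if on a set of
positive `P`-measure `w x j > 0` for some `j` with `Q j = 0`. -/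
noncomputable def wCost {k : ℕ} (P : Measure ℝ) (Q : Fin k → ℝ)
    (w : ℝ → Fin k → ℝ) : EReal :=
  if ∀ᵐ x ∂P, ∀ j, 0 < w x j → 0 < Q j then
    ((∫ x, ∑ j, w x j * Real.logb 2 (w x j / Q j) ∂P : ℝ) : EReal)
  else ⊤

/-- `R(P,Q,D)`: infimum over Markov kernels `w` from `ℝ` to `Fin k` with
`∫ Σ_j w x j ρ(x,a_j) dP ≤ D` of the relative-entropy cost. -/
noncomputable def RPQ {k : ℕ} (P : Measure ℝ) (ρ : ℝ → Fin k → ℝ)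
    (Q : Fin k → ℝ) (D : ℝ) : EReal :=
  ⨅ w ∈ {w : ℝ → Fin k → ℝ | Measurable w ∧ (∀ x j, 0 ≤ w x j) ∧
      (∀ x, ∑ j, w x j = 1) ∧ ∫ x, ∑ j, w x j * ρ x j ∂P ≤ D}, wCost P Q w

/-- The rate-distortion function `R(D) = inf_Q R(P,Q,D)`. -/
noncomputable def RofD {k : ℕ} (P : Measure ℝ) (ρ : ℝ → Fin k → ℝ) (D : ℝ) : EReal :=
  ⨅ Q ∈ {Q : Fin k → ℝ | IsPmf Q}, RPQ P ρ Q D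

/-- `D_max = min_j E_P[ρ(X,a_j)]`. -/
noncomputable def Dmax {k : ℕ} (P : Measure ℝ) (ρ : ℝ → Fin k → ℝ) : ℝ :=
  sInf (Set.range fun j => ∫ x, ρ x j ∂P)

/-- The degeneracy condition at distortion level `D`: there are a pmf `Q*` achieving
`R(P,Q*,D) = R(D)` and `λ* < 0` with `Λ'_{P,Q*}(λ*) = D`,
`λ*·D − Λ_{P,Q*}(λ*) = (ln 2)·R(D)`, and `x ↦ Σ_j Q*_j e^{λ* ρ(x,a_j)}` constant
for `P`-almost every `x`. -/
def DegenAt {k : ℕ} (P : Measure ℝ) (ρ : ℝ → Fin k → ℝ) (D : ℝ) : Prop :=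
  ∃ Q : Fin k → ℝ, IsPmf Q ∧ RPQ P ρ Q D = RofD P ρ D ∧
    ∃ l : ℝ, l < 0 ∧ HasDerivAt (Lam P ρ Q) D l ∧
      ((l * D - Lam P ρ Q l : ℝ) : EReal) = (Real.log 2 : EReal) * RofD P ρ D ∧
      ∃ c : ℝ, ∀ᵐ x ∂P, ∑ j, Q j * Real.exp (l * ρ x j) = c

/-- **Theorem 2.** If for every `λ < 0` the functions `e^{λ r_j(·)}`, `j = 0,1,…,k`,
are linearly independent on `I`, then the degeneracy condition does not hold at any
`D ∈ (0, D_max)`. -/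
theorem stmt_3 {k : ℕ} (hk : 0 < k) (M : ℝ)
    (ρ : ℝ → Fin k → ℝ) (hρmeas : ∀ j, Measurable fun x => ρ x j)
    (hρnn : ∀ x j, 0 ≤ ρ x j) (hρM : ∀ x j, ρ x j ≤ M)
    (hρmin : ∀ x, ∃ j, ρ x j = 0)
    (P : Measure ℝ) [IsProbabilityMeasure P]
    (a b : ℝ) (hab : a < b)
    (g : ℝ → ℝ) (hg : Measurable g) (hgpos : ∀ x ∈ Set.Ioo a b, 0 < g x)
    (habs : ∀ s ⊆ Set.Ioo a b, MeasurableSet s → ENNReal.ofReal (∫ x in s, g x) ≤ P s)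
    (hcont : ∀ j, ContinuousOn (fun x => ρ x j) (Set.Ioo a b))
    (hDmax : 0 < Dmax P ρ)
    (r : Fin (k + 1) → ℝ → ℝ)
    (hr0 : ∀ x, r 0 x = 0)
    (hrsucc : ∀ (j : Fin k) (x : ℝ), r j.succ x = ρ x j)
    (hLI : ∀ l : ℝ, l < 0 → ∀ c : Fin (k + 1) → ℝ,
      (∀ x ∈ Set.Ioo a b, ∑ j, c j * Real.exp (l * r j x) = 0) → ∀ j, c j = 0) :
    ∀ D : ℝ, 0 < D → D < Dmax P ρ → ¬ DegenAt P ρ D := by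
  intro D hD1 hD2 hdeg
  obtain ⟨Q, hQ, -, l, hl, -, -, c, hc⟩ := hdeg
  set f : ℝ → ℝ := fun x => ∑ j, Q j * Real.exp (l * ρ x j) with hf
  -- f is continuous on the interval
  have hfcont : ContinuousOn f (Set.Ioo a b) := by
    apply continuousOn_finset_sum
    intro j _
    exact continuousOn_const.mul ((continuousOn_const.mul (hcont j)).rexp)
  -- f = c everywhere on the interval
  have hfc : ∀ x ∈ Set.Ioo a b, f x = c := by
    by_contra hcon
    push_neg at hcon
    obtain ⟨x0, hx0, hne⟩ := hcon
    have hCA : ContinuousAt f x0 :=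
      hfcont.continuousAt (isOpen_Ioo.mem_nhds hx0)
    have hV : {x | f x ≠ c} ∩ Set.Ioo a b ∈ nhds x0 :=
      Filter.inter_mem (hCA.eventually_ne hne) (isOpen_Ioo.mem_nhds hx0)
    obtain ⟨u, v, huv, hsub⟩ := mem_nhds_iff_exists_Ioo_subset.mp hV
    have huvlt : u < v := lt_trans huv.1 huv.2
    -- find n with positive volume of sₙ
    have hcover : Set.Ioo u v ⊆ ⋃ n : ℕ, (Set.Ioo u v ∩ {x | g x ≤ (n : ℝ)}) := by
      intro x hx
      exact Set.mem_iUnion.mpr ⟨⌈g x⌉₊, hx, Set.mem_setOf.mpr (Nat.le_ceil _)⟩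
    have hex : ∃ n : ℕ, 0 < volume (Set.Ioo u v ∩ {x | g x ≤ (n : ℝ)}) := by
      by_contra hno
      push_neg at hno
      have h0 : volume (⋃ n : ℕ, (Set.Ioo u v ∩ {x | g x ≤ (n : ℝ)})) = 0 :=
        measure_iUnion_null fun n => le_antisymm (hno n) bot_le
      have hle : volume (Set.Ioo u v) ≤ volume (⋃ n : ℕ, (Set.Ioo u v ∩ {x | g x ≤ (n : ℝ)})) :=
        measure_mono hcover
      rw [h0] at hle
      have hpos : (0 : ENNReal) < volume (Set.Ioo u v) := by
        rw [Real.volume_Ioo]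
        simp [sub_pos.mpr huvlt]
      exact absurd (le_antisymm hle bot_le) hpos.ne'
    obtain ⟨n, hn⟩ := hex
    set s : Set ℝ := Set.Ioo u v ∩ {x | g x ≤ (n : ℝ)} with hs
    have hsmeas : MeasurableSet s :=
      measurableSet_Ioo.inter (hg measurableSet_Iic)
    have hssub : s ⊆ Set.Ioo a b := fun x hx => (hsub hx.1).2
    -- g is integrable on s
    have hsvol : volume s ≠ ⊤ := by
      have : volume s ≤ volume (Set.Ioo u v) := measure_mono Set.inter_subset_left
      exact ne_top_of_le_ne_top (by rw [Real.volume_Ioo]; exact ENNReal.ofReal_ne_top) this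
    have hint : IntegrableOn g s := by
      apply Measure.integrableOn_of_bounded hsvol hg.aestronglyMeasurable
      filter_upwards [ae_restrict_mem hsmeas] with x hx
      rw [Real.norm_eq_abs, abs_of_nonneg (hgpos x (hssub hx)).le]
      exact hx.2
    -- positive integral of g on s
    have hipos : 0 < ∫ x in s, g x := by
      rw [setIntegral_pos_iff_support_of_nonneg_ae _ hint]
      · have : s ⊆ Function.support g ∩ s := fun x hx =>
          ⟨(hgpos x (hssub hx)).ne', hx⟩
        exact lt_of_lt_of_le hn (measure_mono this)
      · filter_upwards [ae_restrict_mem hsmeas] with x hx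
        exact (hgpos x (hssub hx)).le
    have hPs : 0 < P s := lt_of_lt_of_le (by simpa using ENNReal.ofReal_pos.mpr hipos)
      (habs s hssub hsmeas)
    -- but s ⊆ {f ≠ c} which is P-null
    have hnull : P {x | ¬ f x = c} = 0 := by
      have := hc
      rw [Filter.eventually_iff, mem_ae_iff] at this
      simpa [hf, Set.compl_setOf] using this
    have hsle : P s ≤ P {x | ¬ f x = c} :=
      measure_mono fun x hx => (hsub hx.1).1
    rw [hnull] at hsle
    exact absurd (le_antisymm hsle bot_le) hPs.ne'
  -- now use linear independence
  have hzero : ∀ j, (Fin.cons (-c) Q : Fin (k+1) → ℝ) j = 0 := by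
    apply hLI l hl
    intro x hx
    rw [Fin.sum_univ_succ]
    simp only [Fin.cons_zero, Fin.cons_succ]
    have : ∀ j : Fin k, r j.succ x = ρ x j := fun j => hrsucc j x
    rw [hr0 x]
    simp only [this]
    rw [mul_zero, Real.exp_zero, mul_one]
    have := hfc x hx
    simp only [hf] at this
    linarith
  have hQ0 : ∀ j : Fin k, Q j = 0 := by
    intro j
    have := hzero j.succ
    simpa using this
  have : (1 : ℝ) = 0 := by
    rw [← hQ.2]
    exact Finset.sum_eq_zero fun j _ => hQ0 j
  norm_num at this
end

section
/- Suppose there exist distinct points x_0, x_1, …, x_k in I such that for all 0 ≤ i ≠ j ≤ k with j ≠ 0 one has r_j(x_j) > r_j(x_i). Then there exists ε > 0 such that the degeneracy condition fails at every D ∈ (0, ε); that is, the degeneracy condition cannot hold at distortion levels D > 0 arbitrarily close to zero. -/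
open Real MeasureTheory Finset
open scoped Classical

section Aux
open Filter Topology


lemma expsum_ne_zero {α : Type*} [DecidableEq α] (s : Finset α) (f E : α → ℝ) (a0 : α)
    (ha0 : a0 ∈ s) (hmax : ∀ b ∈ s, b ≠ a0 → E b < E a0) (hf : f a0 ≠ 0) :
    ∃ l0 < (0:ℝ), ∀ l ≤ l0, (∑ a ∈ s, f a * Real.exp (l * E a)) ≠ 0 := by
  classical
  set c : ℝ → ℝ := fun t => ∑ a ∈ s.filter (fun a => E a = t), f a with hc
  have hgroup : ∀ l : ℝ, (∑ a ∈ s, f a * Real.exp (l * E a))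
      = ∑ t ∈ s.image E, c t * Real.exp (l * t) := by
    intro l
    rw [← Finset.sum_fiberwise_of_maps_to (fun a ha => Finset.mem_image_of_mem E ha)
      (fun a => f a * Real.exp (l * E a))]
    refine Finset.sum_congr rfl fun t ht => ?_
    rw [hc, Finset.sum_mul]
    refine Finset.sum_congr rfl fun a ha => ?_
    rw [(Finset.mem_filter.mp ha).2]
  -- the coefficient at the top exponent is f a0
  have hfiber : s.filter (fun a => E a = E a0) = {a0} := by
    ext a
    simp only [Finset.mem_filter, Finset.mem_singleton]
    constructor
    · rintro ⟨has, hEa⟩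
      by_contra hne
      exact absurd hEa (ne_of_lt (hmax a has hne))
    · rintro rfl; exact ⟨ha0, rfl⟩
  have hcE : c (E a0) = f a0 := by rw [hc]; simp [hfiber]
  set T : Finset ℝ := (s.image E).filter (fun t => c t ≠ 0) with hT
  have hTne : (T : Finset ℝ).Nonempty := ⟨E a0, by
    simp only [hT, Finset.mem_filter]
    exact ⟨Finset.mem_image_of_mem E ha0, by rw [hcE]; exact hf⟩⟩
  set t0 : ℝ := T.min' hTne with ht0
  have hct0 : c t0 ≠ 0 := (Finset.mem_filter.mp (T.min'_mem hTne)).2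
  -- limit argument
  have hlim : Tendsto (fun l => ∑ t ∈ T, c t * Real.exp (l * (t - t0))) atBot
      (𝓝 (c t0)) := by
    have : (c t0) = ∑ t ∈ T, (if t = t0 then c t0 else 0) := by
      rw [Finset.sum_ite_eq' T t0 (fun _ => c t0)]
      exact (if_pos (T.min'_mem hTne)).symm
    rw [this]
    refine tendsto_finset_sum _ fun t ht => ?_
    by_cases h : t = t0
    · subst h; simp only [sub_self, mul_zero, Real.exp_zero, mul_one]
      exact tendsto_const_nhds.congr (fun l => by simp)
    · simp only [h, if_false]
      have hpos : 0 < t - t0 := sub_pos.mpr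
        (lt_of_le_of_ne (T.min'_le t ht) (Ne.symm h))
      have h1 : Tendsto (fun l : ℝ => l * (t - t0)) atBot atBot :=
        Tendsto.atBot_mul_const hpos tendsto_id
      have := (Real.tendsto_exp_atBot).comp h1
      simpa using tendsto_const_nhds.mul this
  have hev : ∀ᶠ l in atBot, (∑ t ∈ T, c t * Real.exp (l * (t - t0))) ≠ 0 :=
    hlim.eventually_ne hct0
  rcases (eventually_atBot.mp hev) with ⟨l1, hl1⟩
  refine ⟨min l1 (-1), lt_of_le_of_lt (min_le_right _ _) (by norm_num), fun l hl => ?_⟩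
  have hll1 : l ≤ l1 := le_trans hl (min_le_left _ _)
  have hsumT : (∑ t ∈ s.image E, c t * Real.exp (l * t))
      = ∑ t ∈ T, c t * Real.exp (l * t) := by
    rw [hT]
    rw [Finset.sum_filter_of_ne]
    intro t ht h
    intro hc0
    exact h (by rw [hc0, zero_mul])
  have hfact : (∑ t ∈ T, c t * Real.exp (l * t))
      = Real.exp (l * t0) * ∑ t ∈ T, c t * Real.exp (l * (t - t0)) := by
    rw [Finset.mul_sum]
    refine Finset.sum_congr rfl fun t ht => ?_
    rw [mul_sub, Real.exp_sub]
    field_simp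
  rw [hgroup, hsumT, hfact]
  exact mul_ne_zero (Real.exp_ne_zero _) (hl1 l hll1)

lemma det_lemma {k : ℕ} (ρ : ℝ → Fin k → ℝ) (pts : Fin (k+1) → ℝ)
    (hcond : ∀ (i : Fin (k+1)) (m : Fin k), i ≠ m.succ → ρ (pts i) m < ρ (pts m.succ) m) :
    ∃ l0 < (0:ℝ), ∀ l ≤ l0, ∀ Q : Fin k → ℝ, ∀ c : ℝ,
      (∀ i : Fin (k+1), ∑ m, Q m * Real.exp (l * ρ (pts i) m) = c) → Q = 0 := by
  classical
  set w : Fin (k+1) → Fin (k+1) → ℝ :=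
    fun rr col => Fin.cases 0 (fun m => ρ (pts rr) m) col with hw
  set A : ℝ → Matrix (Fin (k+1)) (Fin (k+1)) ℝ :=
    fun l => Matrix.of (fun i j => Real.exp (l * w i j)) with hA
  set E : Equiv.Perm (Fin (k+1)) → ℝ := fun σ => ∑ i, w (σ i) i with hE
  have hdet : ∀ l, (A l).det
      = ∑ σ : Equiv.Perm (Fin (k+1)),
          ((Equiv.Perm.sign σ : ℤ) : ℝ) * Real.exp (l * E σ) := by
    intro l
    rw [Matrix.det_apply]
    refine Finset.sum_congr rfl fun σ _ => ?_
    have hprod : (∏ i, (A l) (σ i) i) = Real.exp (l * E σ) := by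
      rw [hE, Finset.mul_sum, Real.exp_sum]
      rfl
    rw [hprod, Units.smul_def, zsmul_eq_mul]
  -- unique max of E at σ = 1
  have hmax : ∀ σ : Equiv.Perm (Fin (k+1)), σ ∈ (Finset.univ : Finset (Equiv.Perm (Fin (k+1)))) →
      σ ≠ 1 → E σ < E 1 := by
    intro σ _ hσ
    have hle : ∀ i : Fin (k+1), w (σ i) i ≤ w i i := by
      intro i
      induction i using Fin.cases with
      | zero => simp [hw]
      | succ m =>
        by_cases h : σ m.succ = m.succ
        · rw [h]
        · have := hcond (σ m.succ) m h
          simpa [hw] using le_of_lt this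
    have hmoved : ∃ m : Fin k, σ m.succ ≠ m.succ := by
      by_contra h
      push_neg at h
      apply hσ
      have h00 : σ 0 = 0 := by
        rcases Fin.eq_zero_or_eq_succ (σ 0) with he | ⟨m, hm⟩
        · exact he
        · have h2 : (0 : Fin (k+1)) = m.succ := σ.injective (by rw [hm, h m])
          exact absurd h2.symm (Fin.succ_ne_zero m)
      refine Equiv.ext fun i => ?_
      show σ i = i
      induction i using Fin.cases with
      | zero => exact h00
      | succ m => exact h m
    obtain ⟨m, hm⟩ := hmoved
    have hstrict : w (σ m.succ) m.succ < w m.succ m.succ := by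
      have := hcond (σ m.succ) m hm
      simpa [hw] using this
    rw [hE]
    refine Finset.sum_lt_sum (fun i _ => hle i) ⟨m.succ, Finset.mem_univ _, by simpa using hstrict⟩
  obtain ⟨l0, hl0neg, hl0⟩ := expsum_ne_zero (Finset.univ)
    (fun σ : Equiv.Perm (Fin (k+1)) => ((Equiv.Perm.sign σ : ℤ) : ℝ)) E 1
    (Finset.mem_univ _) hmax (by simp)
  refine ⟨l0, hl0neg, fun l hl Q c heqs => ?_⟩
  have hdetne : (A l).det ≠ 0 := by
    rw [hdet l]; exact hl0 l hl
  set u : Fin (k+1) → ℝ := Fin.cases (-c) Q with hu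
  have hmv : (A l).mulVec u = 0 := by
    funext i
    have : (A l).mulVec u i = ∑ j, Real.exp (l * w i j) * u j := rfl
    rw [this, Fin.sum_univ_succ]
    have h0 : Real.exp (l * w i 0) * u 0 = -c := by simp [hw, hu]
    have hs : ∀ m : Fin k, Real.exp (l * w i m.succ) * u m.succ
        = Q m * Real.exp (l * ρ (pts i) m) := by
      intro m; simp [hw, hu, mul_comm]
    rw [h0]
    simp only [hs]
    rw [heqs i]
    simp
  have hu0 : u = 0 := Matrix.eq_zero_of_mulVec_eq_zero hdetne hmv
  funext m
  have := congrFun hu0 m.succ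
  simpa [hu] using this

lemma ae_const_on_interval (P : Measure ℝ) [IsProbabilityMeasure P]
    (a b : ℝ) (g : ℝ → ℝ) (hg : Measurable g) (hgpos : ∀ x ∈ Set.Ioo a b, 0 < g x)
    (habs : ∀ s ⊆ Set.Ioo a b, MeasurableSet s → ENNReal.ofReal (∫ x in s, g x) ≤ P s)
    (S : ℝ → ℝ) (hS : ContinuousOn S (Set.Ioo a b)) (c : ℝ)
    (hae : ∀ᵐ x ∂P, S x = c) : ∀ x ∈ Set.Ioo a b, S x = c := by
  intro x₁ hx₁
  by_contra hne
  have hca : ContinuousAt S x₁ := hS.continuousAt (Ioo_mem_nhds hx₁.1 hx₁.2)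
  have hev : ∀ᶠ y in 𝓝 x₁, S y ≠ c := hca.eventually_ne hne
  have hmem : {y | S y ≠ c} ∩ Set.Ioo a b ∈ 𝓝 x₁ :=
    Filter.inter_mem hev (Ioo_mem_nhds hx₁.1 hx₁.2)
  obtain ⟨r, hr, hball⟩ := Metric.mem_nhds_iff.mp hmem
  set t : Set ℝ := Set.Ioo (x₁ - r) (x₁ + r) with ht
  have htsub : t ⊆ {y | S y ≠ c} ∩ Set.Ioo a b := by
    rw [ht, ← Real.ball_eq_Ioo]; exact hball
  set sn : ℕ → Set ℝ := fun n => t ∩ {x | g x ≤ (n : ℝ)} with hsn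
  have hsnmeas : ∀ n, MeasurableSet (sn n) :=
    fun n => measurableSet_Ioo.inter (measurableSet_le hg measurable_const)
  have hunion : (⋃ n, sn n) = t := by
    ext x
    simp only [Set.mem_iUnion, hsn, Set.mem_inter_iff, Set.mem_setOf_eq]
    constructor
    · rintro ⟨n, hx, _⟩; exact hx
    · intro hx
      obtain ⟨n, hn⟩ := exists_nat_ge (g x)
      exact ⟨n, hx, hn⟩
  have htvol : 0 < volume t := by
    rw [ht, Real.volume_Ioo]
    apply ENNReal.ofReal_pos.mpr; linarith
  have hexn : ∃ n, 0 < volume (sn n) := by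
    by_contra h
    push_neg at h
    simp only [le_zero_iff] at h
    have : volume (⋃ n, sn n) = 0 := measure_iUnion_null h
    rw [hunion] at this
    exact absurd this (ne_of_gt htvol)
  obtain ⟨n, hn⟩ := hexn
  have hsnIoo : sn n ⊆ Set.Ioo a b := fun x hx => (htsub hx.1).2
  have hsnNe : sn n ⊆ {y | S y ≠ c} := fun x hx => (htsub hx.1).1
  have hgposn : ∀ x ∈ sn n, 0 < g x := fun x hx => hgpos x (hsnIoo hx)
  have hsnfin : volume (sn n) < ⊤ :=
    lt_of_le_of_lt (measure_mono Set.inter_subset_left) (by rw [ht, Real.volume_Ioo]; exact ENNReal.ofReal_lt_top)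
  have hint : IntegrableOn g (sn n) := by
    refine Integrable.mono' ((integrableOn_const_iff (C := (n:ℝ))).mpr (Or.inr hsnfin))
      hg.aestronglyMeasurable ?_
    refine (ae_restrict_iff' (hsnmeas n)).mpr (Filter.Eventually.of_forall fun x hx => ?_)
    rw [Real.norm_eq_abs, abs_of_pos (hgposn x hx)]
    exact hx.2
  have hpos : 0 < ∫ x in sn n, g x := by
    rw [setIntegral_pos_iff_support_of_nonneg_ae ?_ hint]
    · refine lt_of_lt_of_le hn (measure_mono ?_)
      intro x hx
      exact ⟨ne_of_gt (hgposn x hx), hx⟩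
    · refine (ae_restrict_iff' (hsnmeas n)).mpr (Filter.Eventually.of_forall fun x hx => le_of_lt (hgposn x hx))
  have hP0 : P (sn n) = 0 := by
    have h1 : P {x | ¬ S x = c} = 0 := ae_iff.mp hae
    have : P (sn n) ≤ P {x | ¬ S x = c} := measure_mono (fun x hx => hsnNe hx)
    exact le_antisymm (h1 ▸ this) (zero_le)
  have := habs (sn n) hsnIoo (hsnmeas n)
  rw [hP0] at this
  exact absurd (le_antisymm this (zero_le)) (ne_of_gt (ENNReal.ofReal_pos.mpr hpos))

lemma lam_hasDeriv {k : ℕ} (P : Measure ℝ) [IsProbabilityMeasure P] (M : ℝ)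
    (ρ : ℝ → Fin k → ℝ) (hρmeas : ∀ j, Measurable fun x => ρ x j)
    (hρnn : ∀ x j, 0 ≤ ρ x j) (hρM : ∀ x j, ρ x j ≤ M) (hM : 0 ≤ M)
    (Q : Fin k → ℝ) (hQ : IsPmf Q) (l : ℝ) :
    Integrable (fun x => (∑ j, Q j * (Real.exp (l * ρ x j) * ρ x j)) /
        (∑ j, Q j * Real.exp (l * ρ x j))) P ∧
    HasDerivAt (Lam P ρ Q)
      (∫ x, (∑ j, Q j * (Real.exp (l * ρ x j) * ρ x j)) /
        (∑ j, Q j * Real.exp (l * ρ x j)) ∂P) l := by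
  classical
  obtain ⟨hQnn, hQsum⟩ := hQ
  have hj0 : ∃ j0, 0 < Q j0 := by
    by_contra h
    push_neg at h
    have : ∀ j, Q j = 0 := fun j => le_antisymm (h j) (hQnn j)
    rw [Finset.sum_congr rfl (fun j _ => this j)] at hQsum
    simp at hQsum
  obtain ⟨j0, hj0⟩ := hj0
  set S : ℝ → ℝ → ℝ := fun t x => ∑ j, Q j * Real.exp (t * ρ x j) with hS
  have hSpos : ∀ t x, 0 < S t x := by
    intro t x
    have h1 : Q j0 * Real.exp (t * ρ x j0) ≤ S t x := by
      refine Finset.single_le_sum (f := fun j => Q j * Real.exp (t * ρ x j)) ?_ (Finset.mem_univ j0)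
      intro j _
      exact mul_nonneg (hQnn j) (Real.exp_pos _).le
    exact lt_of_lt_of_le (mul_pos hj0 (Real.exp_pos _)) h1
  have hSle : ∀ t x, S t x ≤ Real.exp (|t| * M) := by
    intro t x
    rw [hS]
    calc ∑ j, Q j * Real.exp (t * ρ x j)
        ≤ ∑ j, Q j * Real.exp (|t| * M) := by
          refine Finset.sum_le_sum fun j _ => ?_
          refine mul_le_mul_of_nonneg_left (Real.exp_le_exp.mpr ?_) (hQnn j)
          calc t * ρ x j ≤ |t * ρ x j| := le_abs_self _
            _ = |t| * |ρ x j| := abs_mul _ _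
            _ ≤ |t| * M := by
                refine mul_le_mul_of_nonneg_left ?_ (abs_nonneg t)
                rw [abs_of_nonneg (hρnn x j)]; exact hρM x j
      _ = Real.exp (|t| * M) := by rw [← Finset.sum_mul, hQsum, one_mul]
  have hSge : ∀ t x, Q j0 * Real.exp (-(|t| * M)) ≤ S t x := by
    intro t x
    refine le_trans ?_ (Finset.single_le_sum
      (f := fun j => Q j * Real.exp (t * ρ x j))
      (fun j _ => mul_nonneg (hQnn j) (Real.exp_pos _).le) (Finset.mem_univ j0))
    refine mul_le_mul_of_nonneg_left (Real.exp_le_exp.mpr ?_) hj0.le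
    have : |t * ρ x j0| ≤ |t| * M := by
      rw [abs_mul]
      refine mul_le_mul_of_nonneg_left ?_ (abs_nonneg t)
      rw [abs_of_nonneg (hρnn x j0)]; exact hρM x j0
    linarith [neg_abs_le (t * ρ x j0)]
  set N : ℝ → ℝ → ℝ := fun t x => ∑ j, Q j * (Real.exp (t * ρ x j) * ρ x j) with hN
  have hNnn : ∀ t x, 0 ≤ N t x := fun t x =>
    Finset.sum_nonneg fun j _ => mul_nonneg (hQnn j)
      (mul_nonneg (Real.exp_pos _).le (hρnn x j))
  have hNle : ∀ t x, N t x ≤ M * S t x := by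
    intro t x
    rw [hN, hS, Finset.mul_sum]
    refine Finset.sum_le_sum fun j _ => ?_
    have : Real.exp (t * ρ x j) * ρ x j ≤ Real.exp (t * ρ x j) * M :=
      mul_le_mul_of_nonneg_left (hρM x j) (Real.exp_pos _).le
    calc Q j * (Real.exp (t * ρ x j) * ρ x j) ≤ Q j * (Real.exp (t * ρ x j) * M) :=
          mul_le_mul_of_nonneg_left this (hQnn j)
      _ = M * (Q j * Real.exp (t * ρ x j)) := by ring
  have hSmeas : ∀ t, Measurable (fun x => S t x) := by
    intro t
    exact Finset.measurable_sum _ fun j _ => ((hρmeas j).const_mul t).exp.const_mul (Q j)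
  have hNmeas : ∀ t, Measurable (fun x => N t x) := by
    intro t
    refine Finset.measurable_sum _ fun j _ => (Measurable.mul ?_ (hρmeas j)).const_mul (Q j)
    exact ((hρmeas j).const_mul t).exp
  -- apply dominated derivative theorem
  have key := hasDerivAt_integral_of_dominated_loc_of_deriv_le (μ := P)
    (F := fun t x => Real.log (S t x)) (F' := fun t x => N t x / S t x)
    (x₀ := l) (s := Metric.ball l 1) (bound := fun _ => M) (Metric.ball_mem_nhds l one_pos)
    (Filter.Eventually.of_forall fun t => ((hSmeas t).log).aestronglyMeasurable)
    ?_ ((hNmeas l).div (hSmeas l)).aestronglyMeasurable ?_ (integrable_const M) ?_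
  · refine ⟨key.1, ?_⟩
    have : Lam P ρ Q = fun t => ∫ x, Real.log (S t x) ∂P := rfl
    rw [this]
    exact key.2
  · -- integrability of F l
    refine Integrable.mono' (integrable_const (|l| * M + |Real.log (Q j0)|))
      ((hSmeas l).log).aestronglyMeasurable
      (Filter.Eventually.of_forall fun x => ?_)
    rw [Real.norm_eq_abs, abs_le]
    constructor
    · have h1 : Real.log (Q j0 * Real.exp (-(|l| * M))) ≤ Real.log (S l x) :=
        Real.log_le_log (mul_pos hj0 (Real.exp_pos _)) (hSge l x)
      rw [Real.log_mul (ne_of_gt hj0) (Real.exp_ne_zero _), Real.log_exp] at h1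
      have h2 : -|Real.log (Q j0)| ≤ Real.log (Q j0) := neg_abs_le _
      linarith
    · have h1 : Real.log (S l x) ≤ Real.log (Real.exp (|l| * M)) :=
        Real.log_le_log (hSpos l x) (hSle l x)
      rw [Real.log_exp] at h1
      have : 0 ≤ |Real.log (Q j0)| := abs_nonneg _
      linarith
  · -- bound on F'
    refine Filter.Eventually.of_forall fun x => fun t _ => ?_
    rw [Real.norm_eq_abs, abs_of_nonneg (div_nonneg (hNnn t x) (hSpos t x).le)]
    rw [div_le_iff₀ (hSpos t x)]
    simpa [mul_comm] using hNle t x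
  · -- differentiability
    refine Filter.Eventually.of_forall fun x => fun t _ => ?_
    have hsum : HasDerivAt (fun t => S t x) (N t x) t := by
      rw [hN]
      refine HasDerivAt.fun_sum fun j _ => ?_
      have h1 : HasDerivAt (fun t : ℝ => t * ρ x j) (ρ x j) t := hasDerivAt_mul_const _
      exact (h1.exp).const_mul (Q j)
    exact hsum.log (ne_of_gt (hSpos t x))

end Aux

/-- **Theorem 3(a).** If there are distinct points `x_0,…,x_k` in `I` with
`r_j(x_j) > r_j(x_i)` for all `0 ≤ i ≠ j ≤ k`, `j ≠ 0`, then the degeneracy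
condition fails at every small enough distortion level `D > 0`. -/
theorem stmt_4 {k : ℕ} (hk : 0 < k) (M : ℝ)
    (ρ : ℝ → Fin k → ℝ) (hρmeas : ∀ j, Measurable fun x => ρ x j)
    (hρnn : ∀ x j, 0 ≤ ρ x j) (hρM : ∀ x j, ρ x j ≤ M)
    (hρmin : ∀ x, ∃ j, ρ x j = 0)
    (P : Measure ℝ) [IsProbabilityMeasure P]
    (a b : ℝ) (hab : a < b)
    (g : ℝ → ℝ) (hg : Measurable g) (hgpos : ∀ x ∈ Set.Ioo a b, 0 < g x)
    (habs : ∀ s ⊆ Set.Ioo a b, MeasurableSet s → ENNReal.ofReal (∫ x in s, g x) ≤ P s)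
    (hcont : ∀ j, ContinuousOn (fun x => ρ x j) (Set.Ioo a b))
    (hDmax : 0 < Dmax P ρ)
    (r : Fin (k + 1) → ℝ → ℝ)
    (hr0 : ∀ x, r 0 x = 0)
    (hrsucc : ∀ (j : Fin k) (x : ℝ), r j.succ x = ρ x j)
    (pts : Fin (k + 1) → ℝ) (hptsI : ∀ j, pts j ∈ Set.Ioo a b)
    (hptsinj : Function.Injective pts)
    (hcond : ∀ i j : Fin (k + 1), i ≠ j → j ≠ 0 → r j (pts i) < r j (pts j)) :
    ∃ ε > (0 : ℝ), ∀ D : ℝ, 0 < D → D < ε → D < Dmax P ρ → ¬ DegenAt P ρ D := by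
  classical
  -- D_max is a lower bound for each E[ρ_j]
  have hDle : ∀ j : Fin k, Dmax P ρ ≤ ∫ x, ρ x j ∂P := by
    intro j
    refine csInf_le ⟨0, ?_⟩ ⟨j, rfl⟩
    rintro y ⟨j', rfl⟩
    exact integral_nonneg fun x => hρnn x j'
  -- M is positive
  have hM : 0 < M := by
    by_contra h
    push_neg at h
    set j : Fin k := ⟨0, hk⟩
    have hz : ∀ x, ρ x j = 0 := fun x => le_antisymm ((hρM x j).trans h) (hρnn x j)
    have : ∫ x, ρ x j ∂P = 0 := by simp [hz]
    have := hDle j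
    rw [‹∫ x, ρ x j ∂P = 0›] at this
    linarith
  -- the points condition in the ρ form
  have hcond' : ∀ (i : Fin (k+1)) (m : Fin k), i ≠ m.succ →
      ρ (pts i) m < ρ (pts m.succ) m := by
    intro i m h
    have := hcond i m.succ h (Fin.succ_ne_zero m)
    rwa [hrsucc, hrsucc] at this
  obtain ⟨l0, hl0neg, hl0⟩ := det_lemma ρ pts hcond'
  set L : ℝ := min l0 (-1) with hL
  refine ⟨Dmax P ρ * Real.exp (L * M), mul_pos hDmax (Real.exp_pos _), ?_⟩
  intro D hD0 hDe hDD hdeg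
  obtain ⟨Q, hQpmf, -, l, hl, hderiv, -, c, hae⟩ := hdeg
  obtain ⟨hQnn, hQsum⟩ := hQpmf
  -- derivative identity
  obtain ⟨hint, hder2⟩ := lam_hasDeriv P M ρ hρmeas hρnn hρM hM.le Q ⟨hQnn, hQsum⟩ l
  have hDeq : D = ∫ x, (∑ j, Q j * (Real.exp (l * ρ x j) * ρ x j)) /
      (∑ j, Q j * Real.exp (l * ρ x j)) ∂P := hderiv.unique hder2
  -- lower bound on the derivative
  have hρint : ∀ j, Integrable (fun x => ρ x j) P := by
    intro j
    refine Integrable.mono' (integrable_const M) (hρmeas j).aestronglyMeasurable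
      (Filter.Eventually.of_forall fun x => ?_)
    rw [Real.norm_eq_abs, abs_of_nonneg (hρnn x j)]
    exact hρM x j
  have hlow : Real.exp (l * M) * Dmax P ρ ≤ D := by
    have hpt : ∀ x, Real.exp (l * M) * (∑ j, Q j * ρ x j)
        ≤ (∑ j, Q j * (Real.exp (l * ρ x j) * ρ x j)) /
          (∑ j, Q j * Real.exp (l * ρ x j)) := by
      intro x
      have hSle1 : (∑ j, Q j * Real.exp (l * ρ x j)) ≤ 1 := by
        rw [← hQsum]
        refine Finset.sum_le_sum fun j _ => ?_
        have : Real.exp (l * ρ x j) ≤ 1 := by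
          rw [Real.exp_le_one_iff]
          exact mul_nonpos_of_nonpos_of_nonneg hl.le (hρnn x j)
        exact mul_le_of_le_one_right (hQnn j) this
      have hSpos : 0 < ∑ j, Q j * Real.exp (l * ρ x j) := by
        have h1 : ∃ j0, 0 < Q j0 := by
          by_contra h
          push_neg at h
          have : ∀ j, Q j = 0 := fun j => le_antisymm (h j) (hQnn j)
          rw [Finset.sum_congr rfl fun j _ => this j] at hQsum
          simp at hQsum
        obtain ⟨j0, hj0⟩ := h1
        refine lt_of_lt_of_le (mul_pos hj0 (Real.exp_pos (l * ρ x j0))) ?_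
        exact Finset.single_le_sum (f := fun j => Q j * Real.exp (l * ρ x j))
          (fun j _ => mul_nonneg (hQnn j) (Real.exp_pos _).le) (Finset.mem_univ j0)
      have hNnn : 0 ≤ ∑ j, Q j * (Real.exp (l * ρ x j) * ρ x j) :=
        Finset.sum_nonneg fun j _ => mul_nonneg (hQnn j)
          (mul_nonneg (Real.exp_pos _).le (hρnn x j))
      have h1 : Real.exp (l * M) * (∑ j, Q j * ρ x j)
          ≤ ∑ j, Q j * (Real.exp (l * ρ x j) * ρ x j) := by
        rw [Finset.mul_sum]
        refine Finset.sum_le_sum fun j _ => ?_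
        have he : Real.exp (l * M) ≤ Real.exp (l * ρ x j) := by
          rw [Real.exp_le_exp]
          exact mul_le_mul_of_nonpos_left (hρM x j) hl.le
        calc Real.exp (l * M) * (Q j * ρ x j)
            = Q j * (Real.exp (l * M) * ρ x j) := by ring
          _ ≤ Q j * (Real.exp (l * ρ x j) * ρ x j) := by
              refine mul_le_mul_of_nonneg_left ?_ (hQnn j)
              exact mul_le_mul_of_nonneg_right he (hρnn x j)
      refine le_trans h1 ?_
      rw [le_div_iff₀ hSpos]
      exact mul_le_of_le_one_right hNnn hSle1
    have hintlhs : Integrable (fun x => Real.exp (l * M) * (∑ j, Q j * ρ x j)) P := by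
      refine Integrable.const_mul ?_ _
      exact integrable_finset_sum _ fun j _ => (hρint j).const_mul (Q j)
    have hmono : ∫ x, Real.exp (l * M) * (∑ j, Q j * ρ x j) ∂P
        ≤ ∫ x, (∑ j, Q j * (Real.exp (l * ρ x j) * ρ x j)) /
          (∑ j, Q j * Real.exp (l * ρ x j)) ∂P :=
      integral_mono hintlhs hint hpt
    have hcomp : Real.exp (l * M) * Dmax P ρ
        ≤ ∫ x, Real.exp (l * M) * (∑ j, Q j * ρ x j) ∂P := by
      rw [integral_const_mul]
      refine mul_le_mul_of_nonneg_left ?_ (Real.exp_pos _).le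
      rw [integral_finset_sum _ fun j _ => (hρint j).const_mul (Q j)]
      have : ∀ j : Fin k, Q j * Dmax P ρ ≤ ∫ x, Q j * ρ x j ∂P := by
        intro j
        rw [integral_const_mul]
        exact mul_le_mul_of_nonneg_left (hDle j) (hQnn j)
      calc Dmax P ρ = ∑ j, Q j * Dmax P ρ := by rw [← Finset.sum_mul, hQsum, one_mul]
        _ ≤ ∑ j, ∫ x, Q j * ρ x j ∂P := Finset.sum_le_sum fun j _ => this j
    rw [hDeq]
    exact le_trans hcomp hmono
  -- conclude l < L ≤ l0
  have hlL : l ≤ l0 := by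
    have h1 : Real.exp (l * M) * Dmax P ρ < Dmax P ρ * Real.exp (L * M) :=
      lt_of_le_of_lt hlow hDe
    rw [mul_comm (Dmax P ρ)] at h1
    have h2 : Real.exp (l * M) < Real.exp (L * M) := lt_of_mul_lt_mul_right h1 hDmax.le
    have h3 : l * M < L * M := Real.exp_lt_exp.mp h2
    have h4 : l < L := lt_of_mul_lt_mul_right h3 hM.le
    exact le_trans h4.le (min_le_left _ _)
  -- constancy on the interval
  have hScont : ContinuousOn (fun x => ∑ j, Q j * Real.exp (l * ρ x j)) (Set.Ioo a b) := by
    refine continuousOn_finset_sum _ fun j _ => ?_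
    refine ContinuousOn.mul continuousOn_const ?_
    exact Real.continuous_exp.comp_continuousOn (continuousOn_const.mul (hcont j))
  have hptwise := ae_const_on_interval P a b g hg hgpos habs _ hScont c hae
  have heqs : ∀ i : Fin (k+1), ∑ m, Q m * Real.exp (l * ρ (pts i) m) = c :=
    fun i => hptwise (pts i) (hptsI i)
  have hQ0 : Q = 0 := hl0 l hlL Q c heqs
  rw [hQ0] at hQsum
  simp at hQsum
end

section
/- Suppose there exist distinct points x_0, x_1, …, x_k in I such that for every permutation π of {0, 1, …, k} other than the identity, Σ_{j=0}^k r_j(x_j) ≠ Σ_{j=0}^k r_j(x_{π(j)}). Then there exists ε > 0 such that the degeneracy condition fails at every D ∈ (0, ε); that is, the degeneracy condition cannot hold at distortion levels D > 0 arbitrarily close to zero. -/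
open Real MeasureTheory Finset
open scoped Classical

section Aux

open Filter

lemma expsum_ne_zero_s5 {ι : Type*} [Fintype ι] (c : ι → ℝ) (T : ι → ℝ) (t₀ : ℝ)
    (h : ∑ i ∈ univ.filter (fun i => T i = t₀), c i ≠ 0) :
    ∃ l₀ : ℝ, ∀ l ≤ l₀, ∑ i, c i * Real.exp (l * T i) ≠ 0 := by
  classical
  set coef : ℝ → ℝ := fun t => ∑ i ∈ univ.filter (fun i => T i = t), c i with hcoef
  set S : Finset ℝ := (univ.image T).filter (fun t => coef t ≠ 0) with hS
  have ht₀S : t₀ ∈ S := by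
    have : t₀ ∈ univ.image T := by
      obtain ⟨i, hi, -⟩ := Finset.exists_ne_zero_of_sum_ne_zero h
      simp only [mem_filter] at hi
      exact Finset.mem_image.2 ⟨i, mem_univ i, hi.2⟩
    exact Finset.mem_filter.2 ⟨this, h⟩
  have hSne : S.Nonempty := ⟨t₀, ht₀S⟩
  set tmin := S.min' hSne with htmin
  have htminS : tmin ∈ S := S.min'_mem hSne
  have hcmin : coef tmin ≠ 0 := (Finset.mem_filter.1 htminS).2
  have key : ∀ l : ℝ, ∑ i, c i * Real.exp (l * T i) = ∑ t ∈ S, coef t * Real.exp (l * t) := by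
    intro l
    have h1 : ∑ i, c i * Real.exp (l * T i)
        = ∑ t ∈ univ.image T, ∑ i ∈ univ.filter (fun i => T i = t), c i * Real.exp (l * T i) := by
      rw [Finset.sum_fiberwise_of_maps_to]
      intro x _; exact Finset.mem_image_of_mem T (mem_univ x)
    rw [h1]
    have h2 : ∀ t ∈ univ.image T,
        ∑ i ∈ univ.filter (fun i => T i = t), c i * Real.exp (l * T i)
          = coef t * Real.exp (l * t) := by
      intro t _
      rw [hcoef, Finset.sum_mul]
      apply Finset.sum_congr rfl
      intro i hi
      simp only [mem_filter] at hi
      rw [hi.2]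
    rw [Finset.sum_congr rfl h2]
    refine (Finset.sum_filter_of_ne ?_).symm
    intro t _ ht
    intro hc
    exact ht (by simp [hc])
  have hlim : Tendsto (fun l => ∑ t ∈ S, coef t * Real.exp (l * (t - tmin))) atBot
      (nhds (coef tmin)) := by
    have : (coef tmin) = ∑ t ∈ S, (if t = tmin then coef tmin else 0) := by
      rw [Finset.sum_ite_eq' S tmin (fun _ => coef tmin)]
      simp [htminS]
    rw [this]
    apply tendsto_finset_sum
    intro t htS
    by_cases ht : t = tmin
    · subst ht
      simp only [sub_self, mul_zero, Real.exp_zero, mul_one, if_true]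
      exact tendsto_const_nhds
    · simp only [ht, if_false]
      have htgt : tmin < t := lt_of_le_of_ne (S.min'_le t htS) (Ne.symm ht)
      have h0 : Tendsto (fun l : ℝ => l * (t - tmin)) atBot atBot :=
        tendsto_id.atBot_mul_const (by linarith)
      have := (Real.tendsto_exp_atBot).comp h0
      simpa using this.const_mul (coef t)
  have hev : ∀ᶠ l in atBot, (∑ t ∈ S, coef t * Real.exp (l * (t - tmin))) ≠ 0 :=
    hlim.eventually_ne hcmin
  obtain ⟨l₀, hl₀⟩ := eventually_atBot.1 hev
  refine ⟨l₀, fun l hl => ?_⟩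
  rw [key l]
  intro h0
  apply hl₀ l hl
  have : ∀ t ∈ S, coef t * Real.exp (l * (t - tmin))
      = Real.exp (-(l * tmin)) * (coef t * Real.exp (l * t)) := by
    intro t _
    rw [mul_sub, Real.exp_sub, Real.exp_neg, div_eq_inv_mul]
    ring
  rw [Finset.sum_congr rfl this, ← Finset.mul_sum, h0, mul_zero]

lemma sum_exp_pos' {k : ℕ} (Q : Fin k → ℝ) (hQnn : ∀ j, 0 ≤ Q j) (hQ1 : ∑ j, Q j = 1)
    (f : Fin k → ℝ) : 0 < ∑ j, Q j * Real.exp (f j) := by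
  have hex : ∃ j, 0 < Q j := by
    by_contra hc
    push_neg at hc
    have : ∑ j, Q j = 0 := Finset.sum_eq_zero fun j _ => le_antisymm (hc j) (hQnn j)
    rw [this] at hQ1; norm_num at hQ1
  obtain ⟨j₀, hj₀⟩ := hex
  apply Finset.sum_pos' (fun j _ => mul_nonneg (hQnn j) (Real.exp_pos _).le)
  exact ⟨j₀, Finset.mem_univ j₀, mul_pos hj₀ (Real.exp_pos _)⟩

lemma lam_hasDerivAt {k : ℕ} (M : ℝ) (hM0 : 0 ≤ M)
    (ρ : ℝ → Fin k → ℝ) (hρmeas : ∀ j, Measurable fun x => ρ x j)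
    (hρnn : ∀ x j, 0 ≤ ρ x j) (hρM : ∀ x j, ρ x j ≤ M)
    (P : Measure ℝ) [IsProbabilityMeasure P]
    (Q : Fin k → ℝ) (hQnn : ∀ j, 0 ≤ Q j) (hQ1 : ∑ j, Q j = 1) (l : ℝ) :
    Integrable (fun x => (∑ j, Q j * ρ x j * Real.exp (l * ρ x j)) /
        (∑ j, Q j * Real.exp (l * ρ x j))) P ∧
    HasDerivAt (Lam P ρ Q)
      (∫ x, (∑ j, Q j * ρ x j * Real.exp (l * ρ x j)) /
        (∑ j, Q j * Real.exp (l * ρ x j)) ∂P) l := by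
  set F : ℝ → ℝ → ℝ := fun t x => Real.log (∑ j, Q j * Real.exp (t * ρ x j)) with hF
  set F' : ℝ → ℝ → ℝ := fun t x => (∑ j, Q j * ρ x j * Real.exp (t * ρ x j)) /
      (∑ j, Q j * Real.exp (t * ρ x j)) with hF'
  have hSpos : ∀ (t x : ℝ), 0 < ∑ j, Q j * Real.exp (t * ρ x j) := fun t x =>
    sum_exp_pos' Q hQnn hQ1 _
  have hSm : ∀ t : ℝ, Measurable fun x => ∑ j, Q j * Real.exp (t * ρ x j) := by
    intro t
    exact Finset.measurable_sum _ fun j _ =>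
      (measurable_const.mul (((hρmeas j).const_mul t).exp))
  have hFmeas : ∀ t : ℝ, AEStronglyMeasurable (F t) P := fun t =>
    ((hSm t).log).aestronglyMeasurable
  have hF'meas : AEStronglyMeasurable (F' l) P := by
    apply Measurable.aestronglyMeasurable
    exact (Finset.measurable_sum _ fun j _ =>
      ((measurable_const.mul (hρmeas j)).mul (((hρmeas j).const_mul l).exp))).div (hSm l)
  have hSub : ∀ (t x : ℝ), ∑ j, Q j * Real.exp (t * ρ x j) ≤ Real.exp (|t| * M) := by
    intro t x
    calc ∑ j, Q j * Real.exp (t * ρ x j) ≤ ∑ j, Q j * Real.exp (|t| * M) := by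
          apply Finset.sum_le_sum
          intro j _
          apply mul_le_mul_of_nonneg_left _ (hQnn j)
          apply Real.exp_le_exp.2
          calc t * ρ x j ≤ |t * ρ x j| := le_abs_self _
            _ = |t| * |ρ x j| := abs_mul _ _
            _ ≤ |t| * M := by
                apply mul_le_mul_of_nonneg_left _ (abs_nonneg t)
                rw [abs_of_nonneg (hρnn x j)]; exact hρM x j
      _ = Real.exp (|t| * M) := by rw [← Finset.sum_mul, hQ1, one_mul]
  have hSlb : ∀ (t x : ℝ), Real.exp (-(|t| * M)) ≤ ∑ j, Q j * Real.exp (t * ρ x j) := by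
    intro t x
    calc Real.exp (-(|t| * M)) = ∑ j, Q j * Real.exp (-(|t| * M)) := by
          rw [← Finset.sum_mul, hQ1, one_mul]
      _ ≤ ∑ j, Q j * Real.exp (t * ρ x j) := by
          apply Finset.sum_le_sum
          intro j _
          apply mul_le_mul_of_nonneg_left _ (hQnn j)
          apply Real.exp_le_exp.2
          calc -(|t| * M) ≤ -|t * ρ x j| := by
                apply neg_le_neg
                rw [abs_mul]
                apply mul_le_mul_of_nonneg_left _ (abs_nonneg t)
                rw [abs_of_nonneg (hρnn x j)]; exact hρM x j
            _ ≤ t * ρ x j := neg_abs_le _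
  have hFint : Integrable (F l) P := by
    apply (integrable_const (|l| * M)).mono' (hFmeas l)
    filter_upwards with x
    rw [Real.norm_eq_abs, abs_le]
    constructor
    · have := Real.log_le_log (Real.exp_pos _) (hSlb l x)
      rwa [Real.log_exp] at this
    · have := Real.log_le_log (hSpos l x) (hSub l x)
      rwa [Real.log_exp] at this
  have h_bound : ∀ᵐ x ∂P, ∀ t ∈ Metric.ball l 1, ‖F' t x‖ ≤ M := by
    filter_upwards with x t _
    rw [Real.norm_eq_abs, abs_le]
    constructor
    · have h1 : 0 ≤ F' t x := by
        apply div_nonneg _ (hSpos t x).le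
        exact Finset.sum_nonneg fun j _ =>
          mul_nonneg (mul_nonneg (hQnn j) (hρnn x j)) (Real.exp_pos _).le
      linarith
    · rw [hF']
      rw [div_le_iff₀ (hSpos t x)]
      rw [Finset.mul_sum]
      apply Finset.sum_le_sum
      intro j _
      calc Q j * ρ x j * Real.exp (t * ρ x j) ≤ Q j * M * Real.exp (t * ρ x j) := by
            apply mul_le_mul_of_nonneg_right _ (Real.exp_pos _).le
            exact mul_le_mul_of_nonneg_left (hρM x j) (hQnn j)
        _ = M * (Q j * Real.exp (t * ρ x j)) := by ring
  have h_diff : ∀ᵐ x ∂P, ∀ t ∈ Metric.ball l 1, HasDerivAt (F · x) (F' t x) t := by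
    filter_upwards with x t _
    have hs : HasDerivAt (fun t : ℝ => ∑ j, Q j * Real.exp (t * ρ x j))
        (∑ j, Q j * ρ x j * Real.exp (t * ρ x j)) t := by
      have : ∀ j ∈ Finset.univ, HasDerivAt (fun t : ℝ => Q j * Real.exp (t * ρ x j))
          (Q j * ρ x j * Real.exp (t * ρ x j)) t := by
        intro j _
        have h1 : HasDerivAt (fun t : ℝ => t * ρ x j) (ρ x j) t := by
          simpa using (hasDerivAt_id t).mul_const (ρ x j)
        have h2 := h1.exp
        have h3 := h2.const_mul (Q j)
        rw [show Q j * ρ x j * Real.exp (t * ρ x j) = Q j * (Real.exp (t * ρ x j) * ρ x j) by ring]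
        exact h3
      exact HasDerivAt.fun_sum this
    exact hs.log (hSpos t x).ne'
  exact hasDerivAt_integral_of_dominated_loc_of_deriv_le (Metric.ball_mem_nhds l (by norm_num : (0:ℝ) < 1))
    (Filter.Eventually.of_forall fun t => hFmeas t) hFint hF'meas h_bound
    (integrable_const M) h_diff

end Aux

/-- **Theorem 3(b).** If there are distinct points `x_0,…,x_k` in `I` such that
`Σ_j r_j(x_j) ≠ Σ_j r_j(x_{π(j)})` for every non-identity permutation `π` of
`{0,1,…,k}`, then the degeneracy condition fails at every small enough
distortion level `D > 0`. -/
theorem stmt_5 {k : ℕ} (hk : 0 < k) (M : ℝ)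
    (ρ : ℝ → Fin k → ℝ) (hρmeas : ∀ j, Measurable fun x => ρ x j)
    (hρnn : ∀ x j, 0 ≤ ρ x j) (hρM : ∀ x j, ρ x j ≤ M)
    (hρmin : ∀ x, ∃ j, ρ x j = 0)
    (P : Measure ℝ) [IsProbabilityMeasure P]
    (a b : ℝ) (hab : a < b)
    (g : ℝ → ℝ) (hg : Measurable g) (hgpos : ∀ x ∈ Set.Ioo a b, 0 < g x)
    (habs : ∀ s ⊆ Set.Ioo a b, MeasurableSet s → ENNReal.ofReal (∫ x in s, g x) ≤ P s)
    (hcont : ∀ j, ContinuousOn (fun x => ρ x j) (Set.Ioo a b))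
    (hDmax : 0 < Dmax P ρ)
    (r : Fin (k + 1) → ℝ → ℝ)
    (hr0 : ∀ x, r 0 x = 0)
    (hrsucc : ∀ (j : Fin k) (x : ℝ), r j.succ x = ρ x j)
    (pts : Fin (k + 1) → ℝ) (hptsI : ∀ j, pts j ∈ Set.Ioo a b)
    (hptsinj : Function.Injective pts)
    (hcond : ∀ perm : Equiv.Perm (Fin (k + 1)), perm ≠ 1 →
      ∑ j, r j (pts j) ≠ ∑ j, r j (pts (perm j))) :
    ∃ ε > (0 : ℝ), ∀ D : ℝ, 0 < D → D < ε → D < Dmax P ρ → ¬ DegenAt P ρ D := by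
  classical
  -- the coefficient and exponent functions of the determinant expansion
  set T : Equiv.Perm (Fin (k + 1)) → ℝ := fun σ => ∑ i, r i (pts (σ i)) with hT
  set cf : Equiv.Perm (Fin (k + 1)) → ℝ := fun σ => ((Equiv.Perm.sign σ : ℤ) : ℝ) with hcf
  have hfilter : (univ.filter (fun σ : Equiv.Perm (Fin (k + 1)) => T σ = T 1)) = {1} := by
    ext σ
    simp only [mem_filter, mem_univ, true_and, Finset.mem_singleton]
    constructor
    · intro hσ
      by_contra hne
      exact hcond σ hne (by simpa [hT] using hσ.symm)
    · rintro rfl; rfl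
  have hcoef : ∑ σ ∈ univ.filter (fun σ : Equiv.Perm (Fin (k + 1)) => T σ = T 1), cf σ ≠ 0 := by
    rw [hfilter, Finset.sum_singleton]
    simp [hcf]
  obtain ⟨l₀, hl₀⟩ := expsum_ne_zero_s5 cf T (T 1) hcoef
  -- basic facts
  have hj0 : (⟨0, hk⟩ : Fin k) = ⟨0, hk⟩ := rfl
  have hM0 : 0 ≤ M := (hρnn 0 ⟨0, hk⟩).trans (hρM 0 ⟨0, hk⟩)
  have hρint : ∀ j, Integrable (fun x => ρ x j) P := by
    intro j
    apply (integrable_const M).mono' (hρmeas j).aestronglyMeasurable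
    filter_upwards with x
    rw [Real.norm_eq_abs, abs_of_nonneg (hρnn x j)]
    exact hρM x j
  have hDmaxle : ∀ j, Dmax P ρ ≤ ∫ x, ρ x j ∂P := by
    intro j
    exact csInf_le (Set.Finite.bddBelow (Set.finite_range _)) ⟨j, rfl⟩
  have hMpos : 0 < M := by
    have h1 : Dmax P ρ ≤ ∫ x, ρ x ⟨0, hk⟩ ∂P := hDmaxle ⟨0, hk⟩
    have h2 : ∫ x, ρ x ⟨0, hk⟩ ∂P ≤ M := by
      have := integral_mono (hρint ⟨0, hk⟩) (integrable_const M)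
        (fun x => hρM x ⟨0, hk⟩)
      simpa using this
    linarith
  refine ⟨Dmax P ρ * Real.exp (l₀ * M), mul_pos hDmax (Real.exp_pos _), ?_⟩
  intro D hD0 hDε hDmax' hdeg
  obtain ⟨Q, ⟨hQnn, hQ1⟩, -, l, hlneg, hderiv, -, c, hc⟩ := hdeg
  -- Step A : D ≥ exp (l * M) * Dmax, hence l < l₀
  have hstepA : Real.exp (l * M) * Dmax P ρ ≤ D := by
    obtain ⟨hF'int, hderiv'⟩ := lam_hasDerivAt M hM0 ρ hρmeas hρnn hρM P Q hQnn hQ1 l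
    have hDeq : D = ∫ x, (∑ j, Q j * ρ x j * Real.exp (l * ρ x j)) /
        (∑ j, Q j * Real.exp (l * ρ x j)) ∂P := hderiv.unique hderiv'
    have hlow_int : Integrable (fun x => Real.exp (l * M) * ∑ j, Q j * ρ x j) P := by
      apply Integrable.const_mul
      exact integrable_finset_sum _ fun j _ => (hρint j).const_mul (Q j)
    have hpt : ∀ x, Real.exp (l * M) * ∑ j, Q j * ρ x j
        ≤ (∑ j, Q j * ρ x j * Real.exp (l * ρ x j)) / (∑ j, Q j * Real.exp (l * ρ x j)) := by
      intro x
      have hS1 : ∑ j, Q j * Real.exp (l * ρ x j) ≤ 1 := by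
        calc ∑ j, Q j * Real.exp (l * ρ x j) ≤ ∑ j, Q j * 1 := by
              apply Finset.sum_le_sum
              intro j _
              apply mul_le_mul_of_nonneg_left _ (hQnn j)
              apply Real.exp_le_one_iff.2
              exact mul_nonpos_of_nonpos_of_nonneg hlneg.le (hρnn x j)
          _ = 1 := by simp [hQ1]
      have hN : Real.exp (l * M) * ∑ j, Q j * ρ x j
          ≤ ∑ j, Q j * ρ x j * Real.exp (l * ρ x j) := by
        rw [Finset.mul_sum]
        apply Finset.sum_le_sum
        intro j _
        rw [mul_comm (Real.exp (l * M))]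
        apply mul_le_mul_of_nonneg_left _ (mul_nonneg (hQnn j) (hρnn x j))
        apply Real.exp_le_exp.2
        exact mul_le_mul_of_nonpos_left (hρM x j) hlneg.le
      have hlow_nn : 0 ≤ Real.exp (l * M) * ∑ j, Q j * ρ x j :=
        mul_nonneg (Real.exp_pos _).le (Finset.sum_nonneg fun j _ =>
          mul_nonneg (hQnn j) (hρnn x j))
      rw [le_div_iff₀ (sum_exp_pos' Q hQnn hQ1 _)]
      calc Real.exp (l * M) * (∑ j, Q j * ρ x j) * (∑ j, Q j * Real.exp (l * ρ x j))
          ≤ Real.exp (l * M) * (∑ j, Q j * ρ x j) * 1 := by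
            exact mul_le_mul_of_nonneg_left hS1 hlow_nn
        _ = Real.exp (l * M) * (∑ j, Q j * ρ x j) := mul_one _
        _ ≤ _ := hN
    have hmono : ∫ x, Real.exp (l * M) * ∑ j, Q j * ρ x j ∂P ≤ D := by
      rw [hDeq]
      exact integral_mono hlow_int hF'int hpt
    have heq : ∫ x, Real.exp (l * M) * ∑ j, Q j * ρ x j ∂P
        = Real.exp (l * M) * ∑ j, Q j * ∫ x, ρ x j ∂P := by
      rw [integral_const_mul]
      congr 1
      rw [integral_finset_sum _ fun j _ => (hρint j).const_mul (Q j)]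
      exact Finset.sum_congr rfl fun j _ => integral_const_mul _ _
    have hsum : Dmax P ρ ≤ ∑ j, Q j * ∫ x, ρ x j ∂P := by
      calc Dmax P ρ = ∑ j, Q j * Dmax P ρ := by rw [← Finset.sum_mul, hQ1, one_mul]
        _ ≤ ∑ j, Q j * ∫ x, ρ x j ∂P := Finset.sum_le_sum fun j _ =>
            mul_le_mul_of_nonneg_left (hDmaxle j) (hQnn j)
    calc Real.exp (l * M) * Dmax P ρ ≤ Real.exp (l * M) * ∑ j, Q j * ∫ x, ρ x j ∂P :=
          mul_le_mul_of_nonneg_left hsum (Real.exp_pos _).le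
      _ = ∫ x, Real.exp (l * M) * ∑ j, Q j * ρ x j ∂P := heq.symm
      _ ≤ D := hmono
  have hll₀ : l ≤ l₀ := by
    have h1 : Real.exp (l * M) * Dmax P ρ < Dmax P ρ * Real.exp (l₀ * M) :=
      lt_of_le_of_lt hstepA hDε
    have h2 : Real.exp (l * M) < Real.exp (l₀ * M) := by
      rw [mul_comm (Dmax P ρ)] at h1
      exact lt_of_mul_lt_mul_right h1 hDmax.le |>.trans_le le_rfl
    have h3 : l * M < l₀ * M := Real.exp_lt_exp.1 h2
    nlinarith
  -- Step B : c > 0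
  have hcpos : 0 < c := by
    have hne : P ≠ 0 := IsProbabilityMeasure.ne_zero P
    have : ∃ x, ∑ j, Q j * Real.exp (l * ρ x j) = c := by
      have := hc.exists
      exact this
    obtain ⟨x, hx⟩ := this
    rw [← hx]
    exact sum_exp_pos' Q hQnn hQ1 _
  -- Step C : the sum is constant on all of (a,b)
  have hφ : ∀ x ∈ Set.Ioo a b, ∑ j, Q j * Real.exp (l * ρ x j) = c := by
    intro x₀ hx₀
    by_contra hne
    set φ : ℝ → ℝ := fun x => ∑ j, Q j * Real.exp (l * ρ x j) with hφdef
    have hφcont : ContinuousOn φ (Set.Ioo a b) := by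
      apply continuousOn_finset_sum
      intro j _
      exact continuousOn_const.mul
        (Real.continuous_exp.comp_continuousOn (continuousOn_const.mul (hcont j)))
    have hca : ContinuousAt φ x₀ := hφcont.continuousAt (isOpen_Ioo.mem_nhds hx₀)
    have hev : ∀ᶠ y in nhds x₀, φ y ≠ c ∧ y ∈ Set.Ioo a b :=
      (hca.eventually_ne hne).and (isOpen_Ioo.mem_nhds hx₀)
    obtain ⟨η, hη, hball⟩ := Metric.eventually_nhds_iff.1 hev
    set Sn : ℕ → Set ℝ := fun n => Metric.ball x₀ η ∩ {y | g y ≤ (n : ℝ)} with hSn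
    have hball' : ∀ y ∈ Metric.ball x₀ η, φ y ≠ c ∧ y ∈ Set.Ioo a b := fun y hy =>
      hball (Metric.mem_ball.1 hy)
    have hSn_sub : ∀ n, Sn n ⊆ Set.Ioo a b := fun n y hy => (hball' y hy.1).2
    have hSn_meas : ∀ n, MeasurableSet (Sn n) := fun n =>
      measurableSet_ball.inter (hg measurableSet_Iic)
    have hPze : ∀ n, P (Sn n) = 0 := by
      intro n
      apply measure_mono_null (fun y hy => (hball' y hy.1).1)
      exact Filter.eventually_iff.1 hc |> fun h => (MeasureTheory.ae_iff.1 hc)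
    have h1 : ∀ n, ∫ y in Sn n, g y ≤ 0 := by
      intro n
      have := habs (Sn n) (hSn_sub n) (hSn_meas n)
      rw [hPze n, le_zero_iff, ENNReal.ofReal_eq_zero] at this
      exact this
    have hvol : ∃ n, 0 < volume (Sn n) := by
      by_contra hcv
      push_neg at hcv
      have hcv' : ∀ n, volume (Sn n) = 0 := fun n => le_antisymm (hcv n) zero_le
      have hcover : Metric.ball x₀ η ⊆ ⋃ n, Sn n := by
        intro y hy
        exact Set.mem_iUnion.2 ⟨⌈g y⌉₊, hy, Nat.le_ceil (g y)⟩
      have : volume (Metric.ball x₀ η) = 0 :=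
        measure_mono_null hcover (measure_iUnion_null hcv')
      rw [Real.volume_ball] at this
      rw [ENNReal.ofReal_eq_zero] at this
      linarith
    obtain ⟨n, hn⟩ := hvol
    have hfin : volume (Sn n) ≠ ⊤ := by
      apply ne_of_lt
      calc volume (Sn n) ≤ volume (Metric.ball x₀ η) :=
            measure_mono Set.inter_subset_left
        _ < ⊤ := by rw [Real.volume_ball]; exact ENNReal.ofReal_lt_top
    have hgnn : ∀ y ∈ Sn n, 0 < g y := fun y hy => hgpos y (hSn_sub n hy)
    have hg_int : IntegrableOn g (Sn n) volume := by
      apply Measure.integrableOn_of_bounded hfin hg.aestronglyMeasurable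
      apply (ae_restrict_iff' (hSn_meas n)).2
      apply Filter.Eventually.of_forall
      intro y hy
      rw [Real.norm_eq_abs, abs_of_pos (hgnn y hy)]
      exact hy.2
    have hpos : 0 < ∫ y in Sn n, g y := by
      rw [setIntegral_pos_iff_support_of_nonneg_ae]
      · apply lt_of_lt_of_le hn
        apply measure_mono
        intro y hy
        exact ⟨(hgnn y hy).ne', hy⟩
      · apply (ae_restrict_iff' (hSn_meas n)).2
        exact Filter.Eventually.of_forall fun y hy => (hgnn y hy).le
      · exact hg_int
    linarith [h1 n]
  -- Step D : determinant vanishes, contradiction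
  set A : Matrix (Fin (k + 1)) (Fin (k + 1)) ℝ := fun i j => Real.exp (l * r j (pts i)) with hA
  set v : Fin (k + 1) → ℝ := Fin.cases (-c) Q with hv
  have hv0 : v ≠ 0 := by
    intro h
    have := congrFun h 0
    simp only [hv, Fin.cases_zero, Pi.zero_apply] at this
    linarith
  have hAv : A.mulVec v = 0 := by
    funext i
    have hrow : A.mulVec v i = ∑ j, A i j * v j := rfl
    rw [hrow, Fin.sum_univ_succ]
    have h0 : A i 0 * v 0 = -c := by
      simp [hA, hv, hr0]
    have hs : ∀ j : Fin k, A i j.succ * v j.succ = Q j * Real.exp (l * ρ (pts i) j) := by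
      intro j
      simp only [hA, hv, Fin.cases_succ, hrsucc]
      ring
    rw [h0, Finset.sum_congr rfl fun j _ => hs j, hφ (pts i) (hptsI i)]
    simp
  have hdet : A.det = 0 := by
    rw [← Matrix.exists_mulVec_eq_zero_iff]
    exact ⟨v, hv0, hAv⟩
  have hexpand : A.det = ∑ σ : Equiv.Perm (Fin (k + 1)), cf σ * Real.exp (l * T σ) := by
    rw [Matrix.det_apply']
    apply Finset.sum_congr rfl
    intro σ _
    congr 1
    rw [hT]
    simp only [hA]
    rw [← Real.exp_sum, Finset.mul_sum]
  exact hl₀ l hll₀ (by rw [← hexpand]; exact hdet)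
end

section
/- Let Q be a probability mass function on Â. If D_min^{P,Q} < D < D_max^{P,Q}, then there exists a unique λ < 0 such that Λ'_{P,Q}(λ) = D, and for this λ one has Λ*_{P,Q}(D) = λ·D − Λ_{P,Q}(λ). -/
open Real MeasureTheory Finset
open scoped Classical Topology

/-- `D_min^{P,Q} = E_P[min_{a ∈ supp Q} ρ(X,a)]`. -/
noncomputable def DminPQ {k : ℕ} (P : Measure ℝ) (ρ : ℝ → Fin k → ℝ)
    (Q : Fin k → ℝ) : ℝ :=
  ∫ x, (⨅ j : {j : Fin k // 0 < Q j}, ρ x (j : Fin k)) ∂P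

/-- `D_max^{P,Q} = Σ_j Q_j · E_P[ρ(X,a_j)]`. -/
noncomputable def DmaxPQ {k : ℕ} (P : Measure ℝ) (ρ : ℝ → Fin k → ℝ)
    (Q : Fin k → ℝ) : ℝ :=
  ∑ j, Q j * ∫ x, ρ x j ∂P

/-- The Fenchel–Legendre transform `Λ*_{P,Q}(D) = sup_{λ ≤ 0} [λ·D − Λ_{P,Q}(λ)]`. -/
noncomputable def LamStar {k : ℕ} (P : Measure ℝ) (ρ : ℝ → Fin k → ℝ)
    (Q : Fin k → ℝ) (D : ℝ) : EReal :=
  ⨆ l ∈ Set.Iic (0 : ℝ), ((l * D - Lam P ρ Q l : ℝ) : EReal)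

set_option maxHeartbeats 1000000

/-! ### Auxiliary pointwise lemmas -/

section Pointwise

variable {k : ℕ}

/-- The partition function `Σ_j q_j e^{l r_j}`. -/
noncomputable def Zf (q r : Fin k → ℝ) (l : ℝ) : ℝ := ∑ j, q j * Real.exp (l * r j)

/-- Its derivative `Σ_j q_j r_j e^{l r_j}`. -/
noncomputable def Nf (q r : Fin k → ℝ) (l : ℝ) : ℝ := ∑ j, q j * r j * Real.exp (l * r j)

/-- Its second derivative `Σ_j q_j r_j² e^{l r_j}`. -/
noncomputable def N2f (q r : Fin k → ℝ) (l : ℝ) : ℝ := ∑ j, q j * r j ^ 2 * Real.exp (l * r j)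

/-- The logarithmic derivative `Nf/Zf`. -/
noncomputable def psif (q r : Fin k → ℝ) (l : ℝ) : ℝ := Nf q r l / Zf q r l

variable {q r : Fin k → ℝ}

lemma Zf_pos (hq : ∀ j, 0 ≤ q j) (hpos : ∃ j, 0 < q j) (l : ℝ) : 0 < Zf q r l := by
  obtain ⟨j0, hj0⟩ := hpos
  exact Finset.sum_pos' (fun j _ => mul_nonneg (hq j) (Real.exp_pos _).le)
    ⟨j0, Finset.mem_univ _, mul_pos hj0 (Real.exp_pos _)⟩

lemma hasDerivAt_Zf (l : ℝ) : HasDerivAt (Zf q r) (Nf q r l) l := by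
  have h : ∀ j : Fin k, HasDerivAt (fun y : ℝ => q j * Real.exp (y * r j))
      (q j * r j * Real.exp (l * r j)) l := by
    intro j
    have := ((hasDerivAt_mul_const (x := l) (r j)).exp).const_mul (q j)
    exact this.congr_deriv (by ring)
  have := HasDerivAt.fun_sum (fun j (_ : j ∈ Finset.univ) => h j)
  exact this

lemma hasDerivAt_Nf (l : ℝ) : HasDerivAt (Nf q r) (N2f q r l) l := by
  have h : ∀ j : Fin k, HasDerivAt (fun y : ℝ => q j * r j * Real.exp (y * r j))
      (q j * r j ^ 2 * Real.exp (l * r j)) l := by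
    intro j
    have := ((hasDerivAt_mul_const (x := l) (r j)).exp).const_mul (q j * r j)
    exact this.congr_deriv (by ring)
  have := HasDerivAt.fun_sum (fun j (_ : j ∈ Finset.univ) => h j)
  exact this

lemma hasDerivAt_logZf (hq : ∀ j, 0 ≤ q j) (hpos : ∃ j, 0 < q j) (l : ℝ) :
    HasDerivAt (fun y => Real.log (Zf q r y)) (psif q r l) l :=
  (hasDerivAt_Zf l).log (Zf_pos hq hpos l).ne'

lemma hasDerivAt_psif (hq : ∀ j, 0 ≤ q j) (hpos : ∃ j, 0 < q j) (l : ℝ) :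
    HasDerivAt (psif q r)
      ((N2f q r l * Zf q r l - Nf q r l ^ 2) / Zf q r l ^ 2) l := by
  have := (hasDerivAt_Nf (q := q) (r := r) l).div (hasDerivAt_Zf (q := q) (r := r) l) (Zf_pos hq hpos l).ne'
  exact this.congr_deriv (by ring)

lemma CSq (hq : ∀ j, 0 ≤ q j) (l : ℝ) : Nf q r l ^ 2 ≤ N2f q r l * Zf q r l := by
  have hnn : ∀ j : Fin k, (0:ℝ) ≤ q j * Real.exp (l * r j) :=
    fun j => mul_nonneg (hq j) (Real.exp_pos _).le
  have key := Finset.sum_mul_sq_le_sq_mul_sq Finset.univ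
    (fun j => Real.sqrt (q j * Real.exp (l * r j)) * r j)
    (fun j => Real.sqrt (q j * Real.exp (l * r j)))
  have e1 : ∑ j, (Real.sqrt (q j * Real.exp (l * r j)) * r j) *
      Real.sqrt (q j * Real.exp (l * r j)) = Nf q r l := by
    apply Finset.sum_congr rfl
    intro j _
    have hs := Real.mul_self_sqrt (hnn j)
    linear_combination (r j) * hs
  have e2 : ∑ j, (Real.sqrt (q j * Real.exp (l * r j)) * r j) ^ 2 = N2f q r l := by
    apply Finset.sum_congr rfl
    intro j _
    have hs := Real.mul_self_sqrt (hnn j)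
    linear_combination (r j) ^ 2 * hs
  have e3 : ∑ j, (Real.sqrt (q j * Real.exp (l * r j))) ^ 2 = Zf q r l := by
    apply Finset.sum_congr rfl
    intro j _
    have hs := Real.mul_self_sqrt (hnn j)
    linear_combination hs
  rw [e1, e2, e3] at key
  exact key

lemma twoV (l : ℝ) : 2 * (N2f q r l * Zf q r l - Nf q r l ^ 2)
    = ∑ i, ∑ j, (q i * Real.exp (l * r i)) * (q j * Real.exp (l * r j)) * (r i - r j) ^ 2 := by
  have h1 : N2f q r l * Zf q r l
      = ∑ i, ∑ j, (q i * Real.exp (l * r i)) * (q j * Real.exp (l * r j)) * r i ^ 2 := by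
    rw [N2f, Zf, Finset.sum_mul_sum]
    exact Finset.sum_congr rfl fun i _ => Finset.sum_congr rfl fun j _ => by ring
  have h2 : N2f q r l * Zf q r l
      = ∑ i, ∑ j, (q i * Real.exp (l * r i)) * (q j * Real.exp (l * r j)) * r j ^ 2 := by
    rw [h1, Finset.sum_comm]
    exact Finset.sum_congr rfl fun i _ => Finset.sum_congr rfl fun j _ => by ring
  have h3 : Nf q r l ^ 2
      = ∑ i, ∑ j, (q i * Real.exp (l * r i)) * (q j * Real.exp (l * r j)) * (r i * r j) := by
    rw [sq, Nf, Finset.sum_mul_sum]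
    exact Finset.sum_congr rfl fun i _ => Finset.sum_congr rfl fun j _ => by ring
  have expand : ∑ i, ∑ j,
      (q i * Real.exp (l * r i)) * (q j * Real.exp (l * r j)) * (r i - r j) ^ 2
      = ∑ i, ∑ j, ((q i * Real.exp (l * r i)) * (q j * Real.exp (l * r j)) * r i ^ 2
          + (q i * Real.exp (l * r i)) * (q j * Real.exp (l * r j)) * r j ^ 2
          - 2 * ((q i * Real.exp (l * r i)) * (q j * Real.exp (l * r j)) * (r i * r j)))  :=
    Finset.sum_congr rfl fun i _ => Finset.sum_congr rfl fun j _ => by ring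
  rw [expand]
  simp only [Finset.sum_sub_distrib, Finset.sum_add_distrib, ← Finset.mul_sum]
  rw [← h1, ← h2, ← h3]
  ring

lemma Vpos (hq : ∀ j, 0 ≤ q j) {i0 j0 : Fin k} (hi0 : 0 < q i0) (hj0 : 0 < q j0)
    (hne : r i0 ≠ r j0) (l : ℝ) : 0 < N2f q r l * Zf q r l - Nf q r l ^ 2 := by
  have h := twoV (q := q) (r := r) l
  have hterm : ∀ i j : Fin k, (0:ℝ) ≤
      (q i * Real.exp (l * r i)) * (q j * Real.exp (l * r j)) * (r i - r j) ^ 2 :=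
    fun i j => mul_nonneg (mul_nonneg (mul_nonneg (hq i) (Real.exp_pos _).le)
      (mul_nonneg (hq j) (Real.exp_pos _).le)) (sq_nonneg _)
  have hpos : 0 < ∑ i, ∑ j,
      (q i * Real.exp (l * r i)) * (q j * Real.exp (l * r j)) * (r i - r j) ^ 2 := by
    apply Finset.sum_pos' (fun i _ => Finset.sum_nonneg fun j _ => hterm i j)
    refine ⟨i0, Finset.mem_univ _, Finset.sum_pos' (fun j _ => hterm i0 j)
      ⟨j0, Finset.mem_univ _, ?_⟩⟩
    apply mul_pos (mul_pos (mul_pos hi0 (Real.exp_pos _)) (mul_pos hj0 (Real.exp_pos _)))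
    exact lt_of_le_of_ne (sq_nonneg _) (Ne.symm (pow_ne_zero 2 (sub_ne_zero.2 hne)))
  linarith

lemma psif_mono (hq : ∀ j, 0 ≤ q j) (hpos : ∃ j, 0 < q j) : Monotone (psif q r) := by
  apply monotone_of_deriv_nonneg
  · exact fun l => (hasDerivAt_psif hq hpos l).differentiableAt
  · intro l
    rw [(hasDerivAt_psif hq hpos l).deriv]
    exact div_nonneg (sub_nonneg.2 (CSq hq l)) (sq_nonneg _)

lemma psif_strictMono (hq : ∀ j, 0 ≤ q j) (hpos : ∃ j, 0 < q j) {i0 j0 : Fin k}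
    (hi0 : 0 < q i0) (hj0 : 0 < q j0) (hne : r i0 ≠ r j0) : StrictMono (psif q r) := by
  apply strictMono_of_deriv_pos
  intro l
  rw [(hasDerivAt_psif hq hpos l).deriv]
  exact div_pos (Vpos hq hi0 hj0 hne l) (pow_pos (Zf_pos hq hpos l) 2)

lemma psif_nonneg (hq : ∀ j, 0 ≤ q j) (hpos : ∃ j, 0 < q j) (hr : ∀ j, 0 ≤ r j) (l : ℝ) :
    0 ≤ psif q r l :=
  div_nonneg (Finset.sum_nonneg fun j _ =>
    mul_nonneg (mul_nonneg (hq j) (hr j)) (Real.exp_pos _).le) (Zf_pos hq hpos l).le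

lemma psif_le (hq : ∀ j, 0 ≤ q j) (hpos : ∃ j, 0 < q j) {M : ℝ} (hrM : ∀ j, r j ≤ M)
    (l : ℝ) : psif q r l ≤ M := by
  rw [psif, div_le_iff₀ (Zf_pos hq hpos l), Zf, Finset.mul_sum]
  apply Finset.sum_le_sum
  intro j _
  have h1 : (0:ℝ) ≤ q j * Real.exp (l * r j) := mul_nonneg (hq j) (Real.exp_pos _).le
  nlinarith [mul_nonneg h1 (sub_nonneg.2 (hrM j))]

lemma psif_tendsto (hq : ∀ j, 0 ≤ q j) (hpos : ∃ j, 0 < q j) :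
    Filter.Tendsto (psif q r) Filter.atBot
      (𝓝 (⨅ j : {j : Fin k // 0 < q j}, r (j : Fin k))) := by
  haveI hne : Nonempty {j : Fin k // 0 < q j} := ⟨⟨hpos.choose, hpos.choose_spec⟩⟩
  set m := ⨅ j : {j : Fin k // 0 < q j}, r (j : Fin k) with hm
  obtain ⟨a, ha⟩ := Finite.exists_min (fun j : {j : Fin k // 0 < q j} => r (j : Fin k))
  have hma : m = r (a : Fin k) :=
    le_antisymm (ciInf_le (Set.Finite.bddBelow (Set.finite_range _)) a) (le_ciInf ha)
  set c : Fin k → ℝ := fun j => if r j = m then q j else 0 with hc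
  have hden : Filter.Tendsto (fun l => ∑ j, q j * Real.exp (l * (r j - m)))
      Filter.atBot (𝓝 (∑ j, c j)) := by
    apply tendsto_finset_sum
    intro j _
    rcases eq_or_ne (r j) m with h | h
    · simp only [h, sub_self, mul_zero, Real.exp_zero, mul_one, hc, if_pos rfl]
      exact tendsto_const_nhds
    · simp only [hc, if_neg h]
      rcases (hq j).eq_or_lt with h0 | h0
      · simp only [← h0, zero_mul]
        exact tendsto_const_nhds
      · have hmj : m < r j := lt_of_le_of_ne (hma ▸ ha ⟨j, h0⟩) (Ne.symm h)
        have h1 : Filter.Tendsto (fun l : ℝ => l * (r j - m)) Filter.atBot Filter.atBot :=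
          Filter.Tendsto.atBot_mul_const (sub_pos.2 hmj) Filter.tendsto_id
        have h2 := Real.tendsto_exp_atBot.comp h1
        have h3 := h2.const_mul (q j)
        simpa using h3
  have hnum : Filter.Tendsto (fun l => ∑ j, q j * r j * Real.exp (l * (r j - m)))
      Filter.atBot (𝓝 (∑ j, c j * r j)) := by
    apply tendsto_finset_sum
    intro j _
    rcases eq_or_ne (r j) m with h | h
    · simp only [h, sub_self, mul_zero, Real.exp_zero, mul_one, hc, if_pos rfl]
      exact tendsto_const_nhds
    · simp only [hc, if_neg h, zero_mul]
      rcases (hq j).eq_or_lt with h0 | h0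
      · simp only [← h0, zero_mul]
        exact tendsto_const_nhds
      · have hmj : m < r j := lt_of_le_of_ne (hma ▸ ha ⟨j, h0⟩) (Ne.symm h)
        have h1 : Filter.Tendsto (fun l : ℝ => l * (r j - m)) Filter.atBot Filter.atBot :=
          Filter.Tendsto.atBot_mul_const (sub_pos.2 hmj) Filter.tendsto_id
        have h2 := Real.tendsto_exp_atBot.comp h1
        have h3 := h2.const_mul (q j * r j)
        simpa using h3
  have hW : 0 < ∑ j, c j := by
    apply Finset.sum_pos' (fun j _ => by
      by_cases h : r j = m <;> simp [hc, h, hq j])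
    refine ⟨(a : Fin k), Finset.mem_univ _, ?_⟩
    simp only [hc, if_pos hma.symm]
    exact a.2
  have hsum : ∑ j, c j * r j = m * ∑ j, c j := by
    rw [Finset.mul_sum]
    apply Finset.sum_congr rfl
    intro j _
    rcases eq_or_ne (r j) m with h | h
    · rw [h]; ring
    · simp [hc, if_neg h]
  have hratio := hnum.div hden hW.ne'
  rw [hsum] at hratio
  have hval : (m * ∑ j, c j) / (∑ j, c j) = m := by
    field_simp
  rw [hval] at hratio
  have heq : ∀ l, psif q r l
      = (∑ j, q j * r j * Real.exp (l * (r j - m))) / (∑ j, q j * Real.exp (l * (r j - m))) := by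
    intro l
    rw [psif, ← mul_div_mul_right (Nf q r l) (Zf q r l) (Real.exp_pos (-(l * m))).ne']
    congr 1
    · rw [Nf, Finset.sum_mul]
      apply Finset.sum_congr rfl
      intro j _
      rw [mul_assoc, ← Real.exp_add, show l * r j + -(l * m) = l * (r j - m) by ring]
    · rw [Zf, Finset.sum_mul]
      apply Finset.sum_congr rfl
      intro j _
      rw [mul_assoc, ← Real.exp_add, show l * r j + -(l * m) = l * (r j - m) by ring]
  exact Filter.Tendsto.congr (fun l => (heq l).symm) hratio

end Pointwise

/-- The derivative of `Lam`. -/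
noncomputable def Gfun {k : ℕ} (P : Measure ℝ) (ρ : ℝ → Fin k → ℝ) (Q : Fin k → ℝ)
    (l : ℝ) : ℝ := ∫ x, psif Q (ρ x) l ∂P

/-- **Lemma 1(ii).** If `D_min^{P,Q} < D < D_max^{P,Q}`, then there is a unique
`λ < 0` with `Λ'_{P,Q}(λ) = D`, and for this `λ` one has
`Λ*_{P,Q}(D) = λ·D − Λ_{P,Q}(λ)`. -/
theorem stmt_9 {k : ℕ} (hk : 0 < k) (A : Set ℝ) (hA : MeasurableSet A)
    (P : Measure ℝ) [IsProbabilityMeasure P] (hsupp : P Aᶜ = 0)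
    (M : ℝ) (ρ : ℝ → Fin k → ℝ) (hρmeas : ∀ j, Measurable fun x => ρ x j)
    (hρnn : ∀ x ∈ A, ∀ j, 0 ≤ ρ x j) (hρM : ∀ x ∈ A, ∀ j, ρ x j ≤ M)
    (hρmin : ∀ x ∈ A, ∃ j, ρ x j = 0)
    (Q : Fin k → ℝ) (hQ : IsPmf Q)
    (D : ℝ) (hD1 : DminPQ P ρ Q < D) (hD2 : D < DmaxPQ P ρ Q) :
    (∃! l : ℝ, l < 0 ∧ HasDerivAt (Lam P ρ Q) D l) ∧
    ∀ l : ℝ, l < 0 → HasDerivAt (Lam P ρ Q) D l →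
      LamStar P ρ Q D = ((l * D - Lam P ρ Q l : ℝ) : EReal) := by
  -- basic facts
  have hae : ∀ᵐ x ∂P, x ∈ A := by
    rw [MeasureTheory.ae_iff]
    exact hsupp
  have hposQ : ∃ j, 0 < Q j := by
    by_contra h
    push_neg at h
    have h0 : ∑ j, Q j = 0 :=
      Finset.sum_eq_zero fun j _ => le_antisymm (h j) (hQ.1 j)
    rw [hQ.2] at h0
    exact one_ne_zero h0
  -- measurability
  have measZ : ∀ l, Measurable fun x => Zf Q (ρ x) l := fun l =>
    Finset.measurable_sum _ fun j _ => (((hρmeas j).const_mul l).exp.const_mul (Q j))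
  have measN : ∀ l, Measurable fun x => Nf Q (ρ x) l := fun l =>
    Finset.measurable_sum _ fun j _ =>
      ((measurable_const.mul (hρmeas j)).mul ((hρmeas j).const_mul l).exp)
  have measpsi : ∀ l, Measurable fun x => psif Q (ρ x) l := fun l =>
    (measN l).div (measZ l)
  -- integrability of psif
  have int_psif : ∀ l, Integrable (fun x => psif Q (ρ x) l) P := by
    intro l
    refine Integrable.mono' (integrable_const M) (measpsi l).aestronglyMeasurable ?_
    filter_upwards [hae] with x hx
    rw [Real.norm_eq_abs, abs_of_nonneg (psif_nonneg hQ.1 hposQ (hρnn x hx) l)]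
    exact psif_le hQ.1 hposQ (hρM x hx) l
  have hρint : ∀ j, Integrable (fun x => ρ x j) P := by
    intro j
    refine Integrable.mono' (integrable_const M) (hρmeas j).aestronglyMeasurable ?_
    filter_upwards [hae] with x hx
    rw [Real.norm_eq_abs, abs_of_nonneg (hρnn x hx j)]
    exact hρM x hx j
  have hLam : Lam P ρ Q = fun l => ∫ x, Real.log (Zf Q (ρ x) l) ∂P := rfl
  -- derivative of Lam
  have hG : ∀ l₀ : ℝ, HasDerivAt (Lam P ρ Q) (Gfun P ρ Q l₀) l₀ := by
    intro l₀
    obtain ⟨j1, hj1⟩ := id hposQ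
    have hmeas : ∀ᶠ l in nhds l₀,
        AEStronglyMeasurable (fun x => Real.log (Zf Q (ρ x) l)) P :=
      Filter.Eventually.of_forall fun l => ((measZ l).log).aestronglyMeasurable
    have hint : Integrable (fun x => Real.log (Zf Q (ρ x) l₀)) P := by
      refine Integrable.mono' (integrable_const (|l₀| * M + |Real.log (Q j1)|))
        ((measZ l₀).log).aestronglyMeasurable ?_
      filter_upwards [hae] with x hx
      have h1 : Zf Q (ρ x) l₀ ≤ Real.exp (|l₀| * M) := by
        rw [Zf]
        calc ∑ j, Q j * Real.exp (l₀ * ρ x j)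
            ≤ ∑ j, Q j * Real.exp (|l₀| * M) := by
              apply Finset.sum_le_sum
              intro j _
              apply mul_le_mul_of_nonneg_left _ (hQ.1 j)
              apply Real.exp_le_exp.2
              calc l₀ * ρ x j ≤ |l₀| * ρ x j :=
                    mul_le_mul_of_nonneg_right (le_abs_self _) (hρnn x hx j)
                _ ≤ |l₀| * M := mul_le_mul_of_nonneg_left (hρM x hx j) (abs_nonneg _)
          _ = Real.exp (|l₀| * M) := by rw [← Finset.sum_mul, hQ.2, one_mul]
      have h2 : Q j1 * Real.exp (-(|l₀| * M)) ≤ Zf Q (ρ x) l₀ := by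
        have hstep : Q j1 * Real.exp (-(|l₀| * M)) ≤ Q j1 * Real.exp (l₀ * ρ x j1) := by
          apply mul_le_mul_of_nonneg_left _ (hQ.1 j1)
          apply Real.exp_le_exp.2
          have hA2 : -|l₀| * ρ x j1 ≤ l₀ * ρ x j1 :=
            mul_le_mul_of_nonneg_right (neg_abs_le l₀) (hρnn x hx j1)
          have hB2 : |l₀| * ρ x j1 ≤ |l₀| * M :=
            mul_le_mul_of_nonneg_left (hρM x hx j1) (abs_nonneg _)
          linarith
        refine hstep.trans ?_
        rw [Zf]
        exact Finset.single_le_sum (f := fun j => Q j * Real.exp (l₀ * ρ x j))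
          (fun j (_ : j ∈ Finset.univ) => mul_nonneg (hQ.1 j) (Real.exp_pos _).le)
          (Finset.mem_univ j1)
      have hZpos : 0 < Zf Q (ρ x) l₀ := Zf_pos hQ.1 hposQ l₀
      rw [Real.norm_eq_abs, abs_le]
      constructor
      · have hlog := Real.log_le_log (mul_pos hj1 (Real.exp_pos _)) h2
        rw [Real.log_mul hj1.ne' (Real.exp_pos _).ne', Real.log_exp] at hlog
        have := neg_abs_le (Real.log (Q j1))
        linarith
      · have hlog := Real.log_le_log hZpos h1
        rw [Real.log_exp] at hlog
        have := abs_nonneg (Real.log (Q j1))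
        linarith
    have hbound : ∀ᵐ x ∂P, ∀ l ∈ Metric.ball l₀ 1, ‖psif Q (ρ x) l‖ ≤ M := by
      filter_upwards [hae] with x hx
      intro l _
      rw [Real.norm_eq_abs, abs_of_nonneg (psif_nonneg hQ.1 hposQ (hρnn x hx) l)]
      exact psif_le hQ.1 hposQ (hρM x hx) l
    have hdiff : ∀ᵐ x ∂P, ∀ l ∈ Metric.ball l₀ 1,
        HasDerivAt (fun y => Real.log (Zf Q (ρ x) y)) (psif Q (ρ x) l) l :=
      Filter.Eventually.of_forall fun x l _ => hasDerivAt_logZf hQ.1 hposQ l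
    have key := hasDerivAt_integral_of_dominated_loc_of_deriv_le
      (F := fun l x => Real.log (Zf Q (ρ x) l)) (F' := fun l x => psif Q (ρ x) l)
      (bound := fun _ => M) (Metric.ball_mem_nhds l₀ one_pos) hmeas hint (measpsi l₀).aestronglyMeasurable
      hbound (integrable_const M) hdiff
    rw [hLam]
    exact key.2
  -- monotonicity, continuity, limits of Gfun
  have Gmono : Monotone (Gfun P ρ Q) := fun l1 l2 h =>
    integral_mono (int_psif l1) (int_psif l2) fun x => psif_mono hQ.1 hposQ h
  have Gcont : Continuous (Gfun P ρ Q) := by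
    apply continuous_of_dominated (bound := fun _ => M)
      (fun l => (measpsi l).aestronglyMeasurable)
    · intro l
      filter_upwards [hae] with x hx
      rw [Real.norm_eq_abs, abs_of_nonneg (psif_nonneg hQ.1 hposQ (hρnn x hx) l)]
      exact psif_le hQ.1 hposQ (hρM x hx) l
    · exact integrable_const M
    · exact Filter.Eventually.of_forall fun x =>
        Differentiable.continuous fun l => (hasDerivAt_psif hQ.1 hposQ l).differentiableAt
  have G0 : Gfun P ρ Q 0 = DmaxPQ P ρ Q := by
    have hpsi0 : ∀ x : ℝ, psif Q (ρ x) 0 = ∑ j, Q j * ρ x j := by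
      intro x
      rw [psif, Nf, Zf]
      simp only [zero_mul, Real.exp_zero, mul_one]
      rw [hQ.2, div_one]
    rw [Gfun]
    rw [integral_congr_ae (Filter.Eventually.of_forall hpsi0)]
    rw [integral_finset_sum _ (fun j _ => (hρint j).const_mul (Q j))]
    exact Finset.sum_congr rfl fun j _ => integral_const_mul _ _
  have Gtendsto : Filter.Tendsto (Gfun P ρ Q) Filter.atBot (𝓝 (DminPQ P ρ Q)) := by
    have := tendsto_integral_filter_of_dominated_convergence (μ := P)
      (F := fun (l : ℝ) (x : ℝ) => psif Q (ρ x) l)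
      (f := fun x => ⨅ j : {j : Fin k // 0 < Q j}, ρ x (j : Fin k))
      (bound := fun _ => M)
      (Filter.Eventually.of_forall fun l => (measpsi l).aestronglyMeasurable)
      (Filter.Eventually.of_forall fun l => by
        filter_upwards [hae] with x hx
        rw [Real.norm_eq_abs, abs_of_nonneg (psif_nonneg hQ.1 hposQ (hρnn x hx) l)]
        exact psif_le hQ.1 hposQ (hρM x hx) l)
      (integrable_const M)
      (Filter.Eventually.of_forall fun x => psif_tendsto hQ.1 hposQ)
    exact this
  -- the set where ρ is non-constant on the support of Q has positive measure
  have hPB : 0 < P {x | x ∈ A ∧ ∃ i j : Fin k, 0 < Q i ∧ 0 < Q j ∧ ρ x i ≠ ρ x j} := by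
    by_contra hcon
    have hB0 : P {x | x ∈ A ∧ ∃ i j : Fin k, 0 < Q i ∧ 0 < Q j ∧ ρ x i ≠ ρ x j} = 0 :=
      le_antisymm (not_lt.mp hcon) zero_le'
    have hnB : ∀ᵐ x ∂P, ¬(x ∈ A ∧ ∃ i j : Fin k, 0 < Q i ∧ 0 < Q j ∧ ρ x i ≠ ρ x j) := by
      rw [MeasureTheory.ae_iff]
      simpa only [not_not] using hB0
    obtain ⟨j1, hj1⟩ := id hposQ
    have hconst : ∀ᵐ x ∂P, ∀ i j : Fin k, 0 < Q i → 0 < Q j → ρ x i = ρ x j := by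
      filter_upwards [hnB, hae] with x hx1 hx2
      intro i j hi hj
      by_contra hnex
      exact hx1 ⟨hx2, i, j, hi, hj, hnex⟩
    haveI : Nonempty {j : Fin k // 0 < Q j} := ⟨⟨j1, hj1⟩⟩
    have e1 : DminPQ P ρ Q = ∫ x, ρ x j1 ∂P := by
      apply integral_congr_ae
      filter_upwards [hconst] with x hx
      exact le_antisymm (ciInf_le (Set.Finite.bddBelow (Set.finite_range _)) (⟨j1, hj1⟩ : {j : Fin k // 0 < Q j}))
        (le_ciInf fun b => (hx j1 (b : Fin k) hj1 b.2).le)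
    have e2 : DmaxPQ P ρ Q = ∫ x, ρ x j1 ∂P := by
      have hterm : ∀ j : Fin k, Q j * ∫ x, ρ x j ∂P = Q j * ∫ x, ρ x j1 ∂P := by
        intro j
        rcases (hQ.1 j).eq_or_lt with h0 | h0
        · rw [← h0]; ring
        · congr 1
          apply integral_congr_ae
          filter_upwards [hconst] with x hx
          exact hx j j1 h0 hj1
      calc DmaxPQ P ρ Q = ∑ j, Q j * ∫ x, ρ x j1 ∂P :=
            Finset.sum_congr rfl fun j _ => hterm j
        _ = ∫ x, ρ x j1 ∂P := by rw [← Finset.sum_mul, hQ.2, one_mul]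
    rw [e1] at hD1
    rw [e2] at hD2
    linarith
  -- strict monotonicity of Gfun
  have Gstrict : StrictMono (Gfun P ρ Q) := by
    intro l1 l2 hl
    have hkey : 0 < ∫ x, (psif Q (ρ x) l2 - psif Q (ρ x) l1) ∂P := by
      rw [integral_pos_iff_support_of_nonneg_ae
        (Filter.Eventually.of_forall fun x => sub_nonneg.2 (psif_mono hQ.1 hposQ hl.le))
        ((int_psif l2).sub (int_psif l1))]
      refine lt_of_lt_of_le hPB (measure_mono ?_)
      rintro x ⟨hxA, i, j, hi, hj, hnex⟩
      exact sub_ne_zero.2 (psif_strictMono hQ.1 hposQ hi hj hnex hl).ne'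
    rw [integral_sub (int_psif l2) (int_psif l1)] at hkey
    exact sub_pos.mp hkey
  -- existence of the critical point
  obtain ⟨l', hl'D, hl'0⟩ :=
    ((Gtendsto.eventually_lt_const hD1).and (Filter.eventually_lt_atBot (0:ℝ))).exists
  have hD0 : D < Gfun P ρ Q 0 := by rw [G0]; exact hD2
  obtain ⟨l0, hl0mem, hl0D⟩ :=
    intermediate_value_Ioo hl'0.le Gcont.continuousOn ⟨hl'D, hD0⟩
  have hl0neg : l0 < 0 := hl0mem.2
  constructor
  · refine ⟨l0, ⟨hl0neg, hl0D ▸ hG l0⟩, ?_⟩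
    rintro y ⟨hy0, hyD⟩
    have hGy : Gfun P ρ Q y = D := (hG y).unique hyD
    exact Gstrict.injective (by rw [hGy, hl0D])
  · intro l hl hderiv
    have hGl : Gfun P ρ Q l = D := (hG l).unique hderiv
    have ΛCont : Continuous (Lam P ρ Q) :=
      Differentiable.continuous fun y => (hG y).differentiableAt
    have tangent : ∀ t : ℝ, Lam P ρ Q l + D * (t - l) ≤ Lam P ρ Q t := by
      intro t
      rcases lt_trichotomy t l with h | h | h
      · obtain ⟨c, hc, hc2⟩ := exists_hasDerivAt_eq_slope (Lam P ρ Q) (Gfun P ρ Q) h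
          ΛCont.continuousOn (fun y _ => hG y)
        have h1 : Gfun P ρ Q c ≤ D := (Gmono hc.2.le).trans hGl.le
        rw [hc2] at h1
        rw [div_le_iff₀ (sub_pos.2 h)] at h1
        linarith
      · rw [h]; simp
      · obtain ⟨c, hc, hc2⟩ := exists_hasDerivAt_eq_slope (Lam P ρ Q) (Gfun P ρ Q) h
          ΛCont.continuousOn (fun y _ => hG y)
        have h1 : D ≤ Gfun P ρ Q c := hGl.ge.trans (Gmono hc.1.le)
        rw [hc2] at h1
        rw [le_div_iff₀ (sub_pos.2 h)] at h1
        linarith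
    apply le_antisymm
    · rw [LamStar]
      refine iSup₂_le fun m hm => ?_
      have hreal : m * D - Lam P ρ Q m ≤ l * D - Lam P ρ Q l := by
        have := tangent m
        linarith
      exact EReal.coe_le_coe_iff.2 hreal
    · rw [LamStar]
      exact le_iSup₂_of_le l (le_of_lt hl) le_rfl
end

section
/- For every probability mass function Q on Â and every D ≥ 0, the quantity R̃(P,Q,D) := inf over Borel probability measures W on A × Â with A-marginal equal to P and ∫ ρ dW ≤ D of [I_W(X;Y) + H(W_Y‖Q)] (where I_W(X;Y) is the mutual information in bits, equal to the relative entropy of W with respect to the product of its marginals divided by ln 2, W_Y is the Â-marginal of W, and H(W_Y‖Q) := Σ_j W_Y(a_j) log₂(W_Y(a_j)/Q(a_j))) equals R(P,Q,D) := inf over Markov kernels W from A to Â with ∫ Σ_j W(x)({a_j}) ρ(x,a_j) dP(x) ≤ D of ∫ Σ_j W(x)({a_j}) log₂(W(x)({a_j})/Q(a_j)) dP(x). -/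
open Real MeasureTheory Finset
open scoped Classical

/-- Kullback–Leibler divergence (in nats) between two measures, as an extended real:
`∫ log (dμ/dν) dμ` if `μ ≪ ν` and the log-likelihood ratio is integrable,
and `⊤` otherwise. -/
noncomputable def klDivE {α : Type*} [MeasurableSpace α] (μ ν : Measure α) : EReal :=
  if μ ≪ ν ∧ Integrable (fun x => Real.log ((μ.rnDeriv ν x).toReal)) μ then
    ((∫ x, Real.log ((μ.rnDeriv ν x).toReal) ∂μ : ℝ) : EReal)
  else ⊤

/-- The mutual information `I_W(X;Y)` in bits of a joint measure `W` on
`ℝ × Fin k`: the relative entropy of `W` with respect to the product of its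
marginals, divided by `ln 2`. -/
noncomputable def mutInfo {k : ℕ} (W : Measure (ℝ × Fin k)) : EReal :=
  (((Real.log 2)⁻¹ : ℝ) : EReal) * klDivE W ((W.map Prod.fst).prod (W.map Prod.snd))

/-- `H(W_Y ‖ Q) = Σ_j W_Y(a_j) log₂ (W_Y(a_j)/Q_j)`, the relative entropy (in bits)
between the second marginal `W_Y` of `W` and `Q`, with value `⊤` if
`W_Y(a_j) > 0` for some `j` with `Q j = 0`. -/
noncomputable def margRelEnt {k : ℕ} (W : Measure (ℝ × Fin k)) (Q : Fin k → ℝ) : EReal :=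
  if ∀ j, Q j = 0 → (W.map Prod.snd) {j} = 0 then
    ((∑ j, ((W.map Prod.snd) {j}).toReal *
        Real.logb 2 (((W.map Prod.snd) {j}).toReal / Q j) : ℝ) : EReal)
  else ⊤


section RateDistortionAux

open Real MeasureTheory Finset
open scoped Classical ENNReal NNReal

/-- Measure-extensionality on `ℝ × Fin k` via rectangles `B ×ˢ {j}`. -/
lemma ext_prod_fin {k : ℕ} (μ ν : Measure (ℝ × Fin k))
    (h : ∀ (j : Fin k) (B : Set ℝ), MeasurableSet B → μ (B ×ˢ ({j} : Set (Fin k))) = ν (B ×ˢ {j})) :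
    μ = ν := by
  ext S hS
  have hslice : ∀ j : Fin k, MeasurableSet ((fun x => (x, j)) ⁻¹' S) :=
    fun j => measurable_prodMk_right hS
  have hdecomp : ∀ (m : Measure (ℝ × Fin k)),
      m S = ∑ j, m (((fun x => (x, j)) ⁻¹' S) ×ˢ ({j} : Set (Fin k))) := by
    intro m
    have hU : S = ⋃ j ∈ (Finset.univ : Finset (Fin k)),
        (((fun x => (x, j)) ⁻¹' S) ×ˢ ({j} : Set (Fin k))) := by
      ext ⟨x, i⟩
      simp only [Set.mem_iUnion, Set.mem_prod, Set.mem_preimage, Set.mem_singleton_iff,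
        Finset.mem_univ, exists_prop, true_and]
      constructor
      · intro hx; exact ⟨i, hx, rfl⟩
      · rintro ⟨j, hj, rfl⟩; exact hj
    have hdisj : (↑(Finset.univ : Finset (Fin k)) : Set (Fin k)).PairwiseDisjoint
        (fun j => (((fun x => (x, j)) ⁻¹' S) ×ˢ ({j} : Set (Fin k)))) := by
      intro i _ j _ hij
      refine Set.disjoint_left.2 ?_
      rintro ⟨x, l⟩ ⟨_, hl1⟩ ⟨_, hl2⟩
      simp only [Set.mem_singleton_iff] at hl1 hl2
      exact hij (by rw [← hl1, ← hl2])
    have := measure_biUnion_finset (μ := m) hdisj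
      (fun j _ => (hslice j).prod (measurableSet_singleton j))
    rw [← this, ← hU]
  rw [hdecomp μ, hdecomp ν]
  exact Finset.sum_congr rfl fun j _ => h j _ (hslice j)

/-- The joint measure built from `P` and a kernel `w`. -/
noncomputable def mkW {k : ℕ} (P : Measure ℝ) (w : ℝ → Fin k → ℝ) : Measure (ℝ × Fin k) :=
  ∑ j, (P.withDensity (fun x => ENNReal.ofReal (w x j))).map (fun x => (x, j))

noncomputable def qfun {k : ℕ} (P : Measure ℝ) (w : ℝ → Fin k → ℝ) (j : Fin k) : ℝ≥0∞ :=
  ∫⁻ x, ENNReal.ofReal (w x j) ∂P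

noncomputable def qRfun {k : ℕ} (P : Measure ℝ) (w : ℝ → Fin k → ℝ) (j : Fin k) : ℝ :=
  (qfun P w j).toReal

variable {k : ℕ} {P : Measure ℝ} {w : ℝ → Fin k → ℝ} {Q : Fin k → ℝ}

lemma mkW_apply {S : Set (ℝ × Fin k)} (hS : MeasurableSet S) :
    mkW P w S = ∑ j, (P.withDensity (fun x => ENNReal.ofReal (w x j))) ((fun x => (x, j)) ⁻¹' S) := by
  rw [mkW, Measure.finset_sum_apply]
  exact Finset.sum_congr rfl fun j _ =>
    Measure.map_apply measurable_prodMk_right hS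

lemma mkW_rect (j : Fin k) {B : Set ℝ} (hB : MeasurableSet B) :
    mkW P w (B ×ˢ ({j} : Set (Fin k))) =
      (P.withDensity (fun x => ENNReal.ofReal (w x j))) B := by
  rw [mkW_apply (hB.prod (measurableSet_singleton j))]
  have : ∀ i : Fin k, (P.withDensity (fun x => ENNReal.ofReal (w x i)))
      ((fun x => (x, i)) ⁻¹' (B ×ˢ ({j} : Set (Fin k)))) =
      if i = j then (P.withDensity (fun x => ENNReal.ofReal (w x j))) B else 0 := by
    intro i
    have hpre : ((fun x => (x, i)) ⁻¹' (B ×ˢ ({j} : Set (Fin k)))) =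
        if i = j then B else ∅ := by
      by_cases h : i = j
      · subst h; ext x; simp
      · ext x
        simp only [Set.mem_preimage, Set.mem_prod, Set.mem_singleton_iff, if_neg h]
        exact iff_of_false (fun hc => h hc.2) (Set.notMem_empty x)
    rw [hpre]
    by_cases h : i = j
    · subst h; simp
    · simp [h]
  rw [Finset.sum_congr rfl fun i _ => this i]
  simp

lemma wj_meas (hw : Measurable w) (j : Fin k) : Measurable fun x => w x j :=
  (measurable_pi_apply j).comp hw

lemma w_le_one (hnn : ∀ x j, 0 ≤ w x j) (hsum : ∀ x, ∑ j, w x j = 1) (x : ℝ) (j : Fin k) :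
    w x j ≤ 1 := by
  rw [← hsum x]
  exact Finset.single_le_sum (fun i _ => hnn x i) (Finset.mem_univ j)

lemma mkW_fst [IsProbabilityMeasure P] (hw : Measurable w) (hnn : ∀ x j, 0 ≤ w x j)
    (hsum : ∀ x, ∑ j, w x j = 1) : (mkW P w).map Prod.fst = P := by
  ext B hB
  rw [Measure.map_apply measurable_fst hB, mkW_apply (measurable_fst hB)]
  have hpre : ∀ j : Fin k, ((fun x => (x, j)) ⁻¹' (Prod.fst ⁻¹' B)) = B := fun j => rfl
  calc ∑ j, (P.withDensity (fun x => ENNReal.ofReal (w x j))) ((fun x => (x, j)) ⁻¹' (Prod.fst ⁻¹' B))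
      = ∑ j, ∫⁻ x in B, ENNReal.ofReal (w x j) ∂P := by
        refine Finset.sum_congr rfl fun j _ => ?_
        rw [hpre j, withDensity_apply _ hB]
    _ = ∫⁻ x in B, ∑ j, ENNReal.ofReal (w x j) ∂P := by
        rw [lintegral_finset_sum _ fun j _ => (wj_meas hw j).ennreal_ofReal]
    _ = ∫⁻ x in B, 1 ∂P := by
        refine lintegral_congr fun x => ?_
        rw [← ENNReal.ofReal_sum_of_nonneg fun j _ => hnn x j, hsum x, ENNReal.ofReal_one]
    _ = P B := by simp

lemma mkW_snd_apply (j : Fin k) :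
    (mkW P w).map Prod.snd {j} = qfun P w j := by
  rw [Measure.map_apply measurable_snd (measurableSet_singleton j),
    mkW_apply (measurable_snd (measurableSet_singleton j))]
  have : ∀ i : Fin k, (P.withDensity (fun x => ENNReal.ofReal (w x i)))
      ((fun x => (x, i)) ⁻¹' (Prod.snd ⁻¹' {j})) =
      if i = j then ∫⁻ x, ENNReal.ofReal (w x j) ∂P else 0 := by
    intro i
    by_cases h : i = j
    · subst h
      have : ((fun x : ℝ => (x, i)) ⁻¹' (Prod.snd ⁻¹' {i})) = Set.univ := by ext x; simp
      rw [this, if_pos rfl, withDensity_apply _ MeasurableSet.univ, setLIntegral_univ]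
    · have : ((fun x : ℝ => (x, i)) ⁻¹' (Prod.snd ⁻¹' {j})) = (∅ : Set ℝ) := by ext x; simp [h]
      rw [this, if_neg h]; simp
  rw [Finset.sum_congr rfl fun i _ => this i]
  simp [qfun]

lemma mkW_prob [IsProbabilityMeasure P] (hw : Measurable w) (hnn : ∀ x j, 0 ≤ w x j)
    (hsum : ∀ x, ∑ j, w x j = 1) : IsProbabilityMeasure (mkW P w) := by
  constructor
  have h : (mkW P w).map Prod.fst Set.univ = P Set.univ := by rw [mkW_fst hw hnn hsum]
  rw [Measure.map_apply measurable_fst MeasurableSet.univ] at h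
  simpa using h

lemma integral_mkW (hw : Measurable w) (hnn : ∀ x j, 0 ≤ w x j)
    (hsum : ∀ x, ∑ j, w x j = 1) (g : ℝ × Fin k → ℝ) (hg : Measurable g)
    (hint : ∀ j, Integrable (fun x => w x j * g (x, j)) P) :
    ∫ p, g p ∂(mkW P w) = ∑ j, ∫ x, w x j * g (x, j) ∂P := by
  have hcoe : ∀ j : Fin k, (fun x => ENNReal.ofReal (w x j)) =
      fun x => (((w x j).toNNReal : ℝ≥0) : ℝ≥0∞) := fun j => rfl
  have hnnmeas : ∀ j : Fin k, AEMeasurable (fun x => (w x j).toNNReal) P :=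
    fun j => (wj_meas hw j).real_toNNReal.aemeasurable
  have hsmul : ∀ j : Fin k, (fun x => (w x j).toNNReal • g (x, j)) = fun x => w x j * g (x, j) := by
    intro j; funext x
    simp [NNReal.smul_def, Real.coe_toNNReal _ (hnn x j)]
  have hib : ∀ j ∈ Finset.univ, Integrable g
      ((P.withDensity (fun x => ENNReal.ofReal (w x j))).map (fun x => (x, j))) := by
    intro j _
    rw [integrable_map_measure hg.aestronglyMeasurable measurable_prodMk_right.aemeasurable,
      hcoe j, integrable_withDensity_iff_integrable_smul₀ (hnnmeas j)]
    show Integrable (fun x => (w x j).toNNReal • g (x, j)) P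
    rw [hsmul j]
    exact hint j
  rw [mkW, integral_finset_sum_measure hib]
  refine Finset.sum_congr rfl fun j _ => ?_
  rw [integral_map measurable_prodMk_right.aemeasurable hg.aestronglyMeasurable, hcoe j,
    integral_withDensity_eq_integral_smul₀ (hnnmeas j) _]
  rw [show (fun x => (w x j).toNNReal • g ((fun y => (y, j)) x)) = fun x => w x j * g (x, j)
    from hsmul j]

lemma integrable_mkW (hw : Measurable w) (hnn : ∀ x j, 0 ≤ w x j)
    (g : ℝ × Fin k → ℝ) (hg : Measurable g)
    (hint : ∀ j, Integrable (fun x => w x j * g (x, j)) P) :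
    Integrable g (mkW P w) := by
  rw [mkW, integrable_finset_sum_measure]
  intro j _
  rw [integrable_map_measure hg.aestronglyMeasurable measurable_prodMk_right.aemeasurable]
  have hcoe : (fun x => ENNReal.ofReal (w x j)) =
      fun x => (((w x j).toNNReal : ℝ≥0) : ℝ≥0∞) := rfl
  rw [hcoe, integrable_withDensity_iff_integrable_smul₀ ((wj_meas hw j).real_toNNReal.aemeasurable)]
  show Integrable (fun x => (w x j).toNNReal • g (x, j)) P
  have : (fun x => (w x j).toNNReal • g (x, j)) = fun x => w x j * g (x, j) := by
    funext x; simp [NNReal.smul_def, Real.coe_toNNReal _ (hnn x j)]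
  rw [this]
  exact hint j


lemma abs_mul_log_self_le {x : ℝ} (h0 : 0 ≤ x) (h1 : x ≤ 1) : |x * Real.log x| ≤ 1 := by
  rcases eq_or_lt_of_le h0 with h | h
  · simp [← h]
  · have hlog : Real.log x ≤ 0 := Real.log_nonpos (le_of_lt h) h1
    have hineq : Real.log x⁻¹ ≤ x⁻¹ - 1 := Real.log_le_sub_one_of_pos (by positivity)
    have hneg : x * Real.log x ≤ 0 := mul_nonpos_of_nonneg_of_nonpos h0 hlog
    rw [abs_of_nonpos hneg]
    have h2 : -(x * Real.log x) = x * Real.log x⁻¹ := by rw [Real.log_inv]; ring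
    have h3 : x * Real.log x⁻¹ ≤ x * (x⁻¹ - 1) :=
      mul_le_mul_of_nonneg_left hineq h0
    have h4 : x * (x⁻¹ - 1) = 1 - x := by field_simp
    linarith [h2, h3, h4]

lemma abs_mul_log_div_le {x q : ℝ} (h0 : 0 ≤ x) (h1 : x ≤ 1) (hq : 0 < q) :
    |x * Real.log (x / q)| ≤ 1 + |Real.log q| := by
  rcases eq_or_lt_of_le h0 with h | h
  · rw [← h]; simp; positivity
  · rw [Real.log_div (ne_of_gt h) (ne_of_gt hq)]
    have : x * (Real.log x - Real.log q) = x * Real.log x - x * Real.log q := by ring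
    rw [this]
    calc |x * Real.log x - x * Real.log q| ≤ |x * Real.log x| + |x * Real.log q| :=
          abs_sub _ _
      _ ≤ 1 + |Real.log q| := by
          have h5 : |x * Real.log q| = x * |Real.log q| := by
            rw [abs_mul, abs_of_nonneg h0]
          have h6 : x * |Real.log q| ≤ 1 * |Real.log q| :=
            mul_le_mul_of_nonneg_right h1 (abs_nonneg _)
          have := abs_mul_log_self_le h0 h1
          linarith

lemma abs_mul_logb_div_le {x q : ℝ} (h0 : 0 ≤ x) (h1 : x ≤ 1) (hq : 0 < q) :
    |x * Real.logb 2 (x / q)| ≤ (1 + |Real.log q|) * |(Real.log 2)⁻¹| := by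
  have : x * Real.logb 2 (x / q) = (x * Real.log (x / q)) * (Real.log 2)⁻¹ := by
    simp only [Real.logb, div_eq_mul_inv]; ring
  rw [this, abs_mul]
  exact mul_le_mul_of_nonneg_right (abs_mul_log_div_le h0 h1 hq) (abs_nonneg _)


lemma q_le_one [IsProbabilityMeasure P] (hw : Measurable w) (hnn : ∀ x j, 0 ≤ w x j)
    (hsum : ∀ x, ∑ j, w x j = 1) (j : Fin k) : qfun P w j ≤ 1 := by
  rw [qfun]
  calc ∫⁻ x, ENNReal.ofReal (w x j) ∂P ≤ ∫⁻ _, 1 ∂P :=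
        lintegral_mono fun x => ENNReal.ofReal_le_one.2 (w_le_one hnn hsum x j)
    _ = 1 := by simp

lemma q_ne_top [IsProbabilityMeasure P] (hw : Measurable w) (hnn : ∀ x j, 0 ≤ w x j)
    (hsum : ∀ x, ∑ j, w x j = 1) (j : Fin k) : qfun P w j ≠ ⊤ :=
  ne_top_of_le_ne_top ENNReal.one_ne_top (q_le_one hw hnn hsum j)

lemma q_zero_iff (hw : Measurable w) (hnn : ∀ x j, 0 ≤ w x j) (j : Fin k) :
    qfun P w j = 0 ↔ (fun x => w x j) =ᵐ[P] 0 := by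
  rw [qfun, lintegral_eq_zero_iff ((wj_meas hw j).ennreal_ofReal)]
  constructor
  · intro h
    filter_upwards [h] with x hx
    simp only [Pi.zero_apply] at hx ⊢
    have := ENNReal.ofReal_eq_zero.1 hx
    exact le_antisymm this (hnn x j)
  · intro h
    filter_upwards [h] with x hx
    simp only [Pi.zero_apply] at hx ⊢
    simp [hx]

lemma integral_w_eq (hw : Measurable w) (hnn : ∀ x j, 0 ≤ w x j) (j : Fin k) :
    ∫ x, w x j ∂P = qRfun P w j := by
  rw [qRfun, qfun, integral_eq_lintegral_of_nonneg_ae (ae_of_all _ fun x => hnn x j)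
    (wj_meas hw j).aestronglyMeasurable]


theorem value_eq [IsProbabilityMeasure P]
    (hw : Measurable w) (hnn : ∀ x j, 0 ≤ w x j) (hsum : ∀ x, ∑ j, w x j = 1)
    (hQnn : ∀ j, 0 ≤ Q j) :
    mutInfo (mkW P w) + margRelEnt (mkW P w) Q = wCost P Q w := by
  haveI hWprob : IsProbabilityMeasure (mkW P w) := mkW_prob hw hnn hsum
  have hfst : (mkW P w).map Prod.fst = P := mkW_fst hw hnn hsum
  have hm : ∀ j : Fin k, (mkW P w).map Prod.snd {j} = qfun P w j := fun j => mkW_snd_apply j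
  have hqnt : ∀ j, qfun P w j ≠ ⊤ := q_ne_top hw hnn hsum
  have hqRpos : ∀ j, qfun P w j ≠ 0 → 0 < qRfun P w j :=
    fun j h => ENNReal.toReal_pos h (hqnt j)
  by_cases hsuppc : ∀ᵐ x ∂P, ∀ j, 0 < w x j → 0 < Q j
  · -- main case
    have hQ0 : ∀ j, Q j = 0 → (fun x => w x j) =ᵐ[P] 0 := by
      intro j hQj
      have hj := (ae_all_iff.1 hsuppc) j
      filter_upwards [hj] with x hx
      simp only [Pi.zero_apply]
      by_contra hne
      have hpos : 0 < w x j := lt_of_le_of_ne (hnn x j) (Ne.symm hne)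
      exact absurd (hx hpos) (by rw [hQj]; exact lt_irrefl 0)
    haveI : IsProbabilityMeasure ((mkW P w).map Prod.snd) :=
      Measure.isProbabilityMeasure_map measurable_snd.aemeasurable
    set m : Measure (Fin k) := (mkW P w).map Prod.snd with hmdef
    set ν : Measure (ℝ × Fin k) := P.prod m with hνdef
    set f : ℝ × Fin k → ℝ≥0∞ :=
      fun p => if qfun P w p.2 = 0 then 0 else ENNReal.ofReal (w p.1 p.2) / qfun P w p.2
      with hfdef
    have hfmeas : Measurable f := by
      apply measurable_from_prod_countable_left
      intro j
      by_cases h : qfun P w j = 0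
      · simp only [hfdef, h, if_pos]; exact measurable_const
      · simp only [hfdef, if_neg h]
        exact ((wj_meas hw j).ennreal_ofReal).div_const _
    -- representation of mkW as a density w.r.t. ν
    have hWrepr : mkW P w = ν.withDensity f := by
      refine ext_prod_fin _ _ fun j B hB => ?_
      rw [mkW_rect j hB, withDensity_apply _ (hB.prod (measurableSet_singleton j)),
        ← Measure.prod_restrict, lintegral_prod _ hfmeas.aemeasurable]
      have hinner : ∀ x : ℝ, ∫⁻ y, f (x, y) ∂(m.restrict {j}) = f (x, j) * qfun P w j := by
        intro x
        have h1 : ∫⁻ y in ({j} : Set (Fin k)), f (x, y) ∂m = f (x, j) * m {j} :=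
          lintegral_singleton _ _
        rw [show m.restrict {j} = m.restrict {j} from rfl]
        exact h1.trans (by rw [hm j])
      rw [lintegral_congr hinner]
      by_cases h : qfun P w j = 0
      · have hzero : ∀ x : ℝ, f (x, j) * qfun P w j = 0 := fun x => by rw [h, mul_zero]
        rw [lintegral_congr hzero, lintegral_zero, withDensity_apply _ hB]
        refine le_antisymm ?_ zero_le
        calc ∫⁻ x in B, ENNReal.ofReal (w x j) ∂P
            ≤ ∫⁻ x, ENNReal.ofReal (w x j) ∂P := setLIntegral_le_lintegral _ _
          _ = qfun P w j := rfl
          _ = 0 := h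
      · have hne : ∀ x : ℝ, f (x, j) * qfun P w j = ENNReal.ofReal (w x j) := by
          intro x
          simp only [hfdef, if_neg h]
          exact ENNReal.div_mul_cancel h (hqnt j)
        rw [lintegral_congr hne, withDensity_apply _ hB]
    have habs : mkW P w ≪ ν := by
      rw [hWrepr]; exact withDensity_absolutelyContinuous _ _
    have hrn : (mkW P w).rnDeriv ν =ᵐ[ν] f := by
      have h := Measure.rnDeriv_withDensity ν hfmeas
      rwa [← hWrepr] at h
    have hrnW : (mkW P w).rnDeriv ν =ᵐ[mkW P w] f := habs.ae_eq hrn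
    have hlogrn : (fun p => Real.log (((mkW P w).rnDeriv ν p).toReal)) =ᵐ[mkW P w]
        (fun p => Real.log ((f p).toReal)) := by
      filter_upwards [hrnW] with p hp
      rw [hp]
    have hterm : ∀ j, (fun x => w x j * Real.log ((f (x, j)).toReal)) =ᵐ[P]
        (fun x => w x j * Real.log (w x j / qRfun P w j)) := by
      intro j
      by_cases h : qfun P w j = 0
      · have hz := (q_zero_iff hw hnn j).1 h
        filter_upwards [hz] with x hx
        simp only [Pi.zero_apply] at hx
        rw [hx]; ring
      · refine ae_of_all _ fun x => ?_
        have : (f (x, j)).toReal = w x j / qRfun P w j := by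
          simp only [hfdef, if_neg h, ENNReal.toReal_div, ENNReal.toReal_ofReal (hnn x j)]
          rfl
        show w x j * Real.log ((f (x, j)).toReal) = w x j * Real.log (w x j / qRfun P w j)
        rw [this]
    have hintj : ∀ j, Integrable (fun x => w x j * Real.log (w x j / qRfun P w j)) P := by
      intro j
      by_cases h : qfun P w j = 0
      · have hz := (q_zero_iff hw hnn j).1 h
        refine (integrable_zero _ _ _).congr ?_
        filter_upwards [hz] with x hx
        simp only [Pi.zero_apply] at hx
        rw [hx]; simp
      · refine Integrable.mono' (integrable_const (1 + |Real.log (qRfun P w j)|))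
          ((wj_meas hw j).mul (Real.measurable_log.comp
            ((wj_meas hw j).div_const _))).aestronglyMeasurable
          (ae_of_all _ fun x => ?_)
        rw [Real.norm_eq_abs]
        exact abs_mul_log_div_le (hnn x j) (w_le_one hnn hsum x j) (hqRpos j h)
    have hlogf_meas : Measurable fun p : ℝ × Fin k => Real.log ((f p).toReal) :=
      Real.measurable_log.comp hfmeas.ennreal_toReal
    have hint_f : Integrable (fun p => Real.log ((f p).toReal)) (mkW P w) :=
      integrable_mkW hw hnn _ hlogf_meas (fun j => (hintj j).congr (hterm j).symm)
    have hint_rn : Integrable (fun p => Real.log (((mkW P w).rnDeriv ν p).toReal)) (mkW P w) :=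
      hint_f.congr hlogrn.symm
    have hkl : klDivE (mkW P w) ν =
        ((∑ j, ∫ x, w x j * Real.log (w x j / qRfun P w j) ∂P : ℝ) : EReal) := by
      rw [klDivE, if_pos ⟨habs, hint_rn⟩]
      congr 1
      rw [integral_congr_ae hlogrn,
        integral_mkW hw hnn hsum _ hlogf_meas (fun j => (hintj j).congr (hterm j).symm)]
      exact Finset.sum_congr rfl fun j _ => integral_congr_ae (hterm j)
    have hmut : mutInfo (mkW P w) =
        ((∑ j, ∫ x, w x j * Real.logb 2 (w x j / qRfun P w j) ∂P : ℝ) : EReal) := by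
      rw [mutInfo, hfst, ← hmdef, ← hνdef, hkl, ← EReal.coe_mul]
      congr 1
      rw [Finset.mul_sum]
      refine Finset.sum_congr rfl fun j _ => ?_
      rw [← integral_const_mul]
      refine integral_congr_ae (ae_of_all _ fun x => ?_)
      simp only [Real.logb, div_eq_mul_inv]
      ring
    have hQm : ∀ j, Q j = 0 → (mkW P w).map Prod.snd {j} = 0 := fun j hQj => by
      rw [hm j]; exact (q_zero_iff hw hnn j).2 (hQ0 j hQj)
    have hmarg : margRelEnt (mkW P w) Q =
        ((∑ j, qRfun P w j * Real.logb 2 (qRfun P w j / Q j) : ℝ) : EReal) := by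
      rw [margRelEnt, if_pos hQm]
      congr 1
      refine Finset.sum_congr rfl fun j _ => ?_
      rw [hm j]
      rfl
    have hlogbmeas : ∀ (j : Fin k) (c : ℝ), Measurable fun x => Real.logb 2 (w x j / c) := by
      intro j c
      simp only [Real.logb]
      exact (Real.measurable_log.comp ((wj_meas hw j).div_const c)).div_const _
    have hwzero : ∀ (j : Fin k), (fun x => w x j) =ᵐ[P] 0 → ∀ c : ℝ,
        Integrable (fun x => w x j * Real.logb 2 (w x j / c)) P := by
      intro j hz c
      refine (integrable_zero _ _ _).congr ?_
      filter_upwards [hz] with x hx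
      simp only [Pi.zero_apply] at hx
      rw [hx]; simp
    have hwintgen : ∀ (j : Fin k) (c : ℝ), 0 < c →
        Integrable (fun x => w x j * Real.logb 2 (w x j / c)) P := by
      intro j c hc
      refine Integrable.mono' (integrable_const ((1 + |Real.log c|) * |(Real.log 2)⁻¹|))
        ((wj_meas hw j).mul (hlogbmeas j c)).aestronglyMeasurable
        (ae_of_all _ fun x => ?_)
      rw [Real.norm_eq_abs]
      exact abs_mul_logb_div_le (hnn x j) (w_le_one hnn hsum x j) hc
    have hwint1 : ∀ j, Integrable (fun x => w x j * Real.logb 2 (w x j / qRfun P w j)) P := by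
      intro j
      by_cases h : qfun P w j = 0
      · exact hwzero j ((q_zero_iff hw hnn j).1 h) _
      · exact hwintgen j _ (hqRpos j h)
    have hwint0 : ∀ j, Integrable (fun x => w x j * Real.logb 2 (w x j / Q j)) P := by
      intro j
      by_cases hQj : Q j = 0
      · exact hwzero j (hQ0 j hQj) _
      · exact hwintgen j _ (lt_of_le_of_ne (hQnn j) (Ne.symm hQj))
    have hsplit : ∀ j, ∫ x, w x j * Real.logb 2 (w x j / Q j) ∂P =
        ∫ x, w x j * Real.logb 2 (w x j / qRfun P w j) ∂P +
          qRfun P w j * Real.logb 2 (qRfun P w j / Q j) := by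
      intro j
      by_cases hQj : Q j = 0
      · have hz := hQ0 j hQj
        have hq0 : qfun P w j = 0 := (q_zero_iff hw hnn j).2 hz
        have hqR0 : qRfun P w j = 0 := by simp [qRfun, hq0]
        have e1 : ∫ x, w x j * Real.logb 2 (w x j / Q j) ∂P = 0 := by
          refine integral_eq_zero_of_ae ?_
          filter_upwards [hz] with x hx
          simp only [Pi.zero_apply] at hx
          simp [hx]
        have e2 : ∫ x, w x j * Real.logb 2 (w x j / qRfun P w j) ∂P = 0 := by
          refine integral_eq_zero_of_ae ?_
          filter_upwards [hz] with x hx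
          simp only [Pi.zero_apply] at hx
          simp [hx]
        rw [e1, e2, hqR0]
        simp
      · have hQpos : 0 < Q j := lt_of_le_of_ne (hQnn j) (Ne.symm hQj)
        by_cases hqj : qfun P w j = 0
        · have hz := (q_zero_iff hw hnn j).1 hqj
          have hqR0 : qRfun P w j = 0 := by simp [qRfun, hqj]
          have e1 : ∫ x, w x j * Real.logb 2 (w x j / Q j) ∂P = 0 := by
            refine integral_eq_zero_of_ae ?_
            filter_upwards [hz] with x hx
            simp only [Pi.zero_apply] at hx
            simp [hx]
          have e2 : ∫ x, w x j * Real.logb 2 (w x j / qRfun P w j) ∂P = 0 := by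
            refine integral_eq_zero_of_ae ?_
            filter_upwards [hz] with x hx
            simp only [Pi.zero_apply] at hx
            simp [hx]
          rw [e1, e2, hqR0]
          simp
        · have hqRp := hqRpos j hqj
          have hpt : ∀ x, w x j * Real.logb 2 (w x j / Q j) =
              w x j * Real.logb 2 (w x j / qRfun P w j) +
                w x j * Real.logb 2 (qRfun P w j / Q j) := by
            intro x
            rcases eq_or_lt_of_le (hnn x j) with h | h
            · rw [← h]; ring
            · have h1 := Real.log_div (ne_of_gt h) (ne_of_gt hQpos)
              have h2 := Real.log_div (ne_of_gt h) (ne_of_gt hqRp)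
              have h3 := Real.log_div (ne_of_gt hqRp) (ne_of_gt hQpos)
              simp only [Real.logb, h1, h2, h3]
              ring
          have hint2 : Integrable (fun x => w x j * Real.logb 2 (qRfun P w j / Q j)) P := by
            have hI : Integrable (fun x => w x j) P := by
              refine Integrable.mono' (integrable_const 1)
                (wj_meas hw j).aestronglyMeasurable (ae_of_all _ fun x => ?_)
              rw [Real.norm_eq_abs, abs_of_nonneg (hnn x j)]
              exact w_le_one hnn hsum x j
            exact hI.mul_const _
          calc ∫ x, w x j * Real.logb 2 (w x j / Q j) ∂P
              = ∫ x, (w x j * Real.logb 2 (w x j / qRfun P w j) +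
                  w x j * Real.logb 2 (qRfun P w j / Q j)) ∂P :=
                integral_congr_ae (ae_of_all _ hpt)
            _ = ∫ x, w x j * Real.logb 2 (w x j / qRfun P w j) ∂P +
                  ∫ x, w x j * Real.logb 2 (qRfun P w j / Q j) ∂P :=
                integral_add (hwint1 j) hint2
            _ = ∫ x, w x j * Real.logb 2 (w x j / qRfun P w j) ∂P +
                  qRfun P w j * Real.logb 2 (qRfun P w j / Q j) := by
                rw [integral_mul_const, integral_w_eq hw hnn j]
    have hcost : wCost P Q w = ((∑ j, ∫ x, w x j * Real.logb 2 (w x j / Q j) ∂P : ℝ) : EReal) := by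
      rw [wCost, if_pos hsuppc]
      congr 1
      rw [integral_finset_sum _ fun j _ => hwint0 j]
    rw [hmut, hmarg, hcost, ← EReal.coe_add]
    congr 1
    rw [← Finset.sum_add_distrib]
    exact Finset.sum_congr rfl fun j _ => (hsplit j).symm
  · -- top case
    rw [wCost, if_neg hsuppc]
    have hmargtop : margRelEnt (mkW P w) Q = ⊤ := by
      rw [margRelEnt, if_neg ?_]
      intro hcontra
      apply hsuppc
      rw [ae_all_iff]
      intro j
      by_cases hQj : 0 < Q j
      · exact ae_of_all _ fun x _ => hQj
      · have hQj0 : Q j = 0 := le_antisymm (not_lt.1 hQj) (hQnn j)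
        have h0 := hcontra j hQj0
        rw [hm j] at h0
        have hz := (q_zero_iff hw hnn j).1 h0
        filter_upwards [hz] with x hx h
        simp only [Pi.zero_apply] at hx
        rw [hx] at h
        exact absurd h (lt_irrefl 0)
    have hmutnb : mutInfo (mkW P w) ≠ ⊥ := by
      rw [mutInfo]
      have hlog2 : (0 : ℝ) < (Real.log 2)⁻¹ := by
        have := Real.log_pos one_lt_two; positivity
      rw [klDivE]
      split
      · rw [← EReal.coe_mul]; exact EReal.coe_ne_bot _
      · rw [EReal.coe_mul_top_of_pos hlog2]; simp
    rw [hmargtop, EReal.add_top_of_ne_bot hmutnb]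

theorem exists_kernel {k : ℕ} (hk : 0 < k) (P : Measure ℝ) [IsProbabilityMeasure P]
    (W : Measure (ℝ × Fin k)) [IsProbabilityMeasure W] (hWfst : W.map Prod.fst = P) :
    ∃ w : ℝ → Fin k → ℝ, Measurable w ∧ (∀ x j, 0 ≤ w x j) ∧ (∀ x, ∑ j, w x j = 1) ∧
      W = mkW P w := by
  set μ : Fin k → Measure ℝ := fun j => (W.restrict (Prod.snd ⁻¹' {j})).map Prod.fst with hμdef
  have hμ_apply : ∀ (j : Fin k) (B : Set ℝ), MeasurableSet B →
      μ j B = W (B ×ˢ ({j} : Set (Fin k))) := by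
    intro j B hB
    rw [hμdef]
    rw [Measure.map_apply measurable_fst hB, Measure.restrict_apply (measurable_fst hB),
      Set.prod_eq]
  have h1 : ∀ j, IsFiniteMeasure (μ j) := by
    intro j
    constructor
    rw [hμ_apply j Set.univ MeasurableSet.univ]
    exact lt_of_le_of_lt (measure_mono (Set.subset_univ _)) (measure_lt_top W Set.univ)
  have hμP : ∀ j, μ j ≪ P := by
    intro j
    refine Measure.AbsolutelyContinuous.mk fun B hB h0 => ?_
    rw [hμ_apply j B hB]
    have hle : W (B ×ˢ ({j} : Set (Fin k))) ≤ W (Prod.fst ⁻¹' B) :=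
      measure_mono (fun p hp => hp.1)
    have hz : W (Prod.fst ⁻¹' B) = 0 := by
      rw [← Measure.map_apply measurable_fst hB, hWfst]
      exact h0
    exact le_antisymm (hz ▸ hle) zero_le
  have hsum_meas : ∀ (B : Set ℝ), MeasurableSet B →
      ∑ j, W (B ×ˢ ({j} : Set (Fin k))) = P B := by
    intro B hB
    have hU : (B ×ˢ (Set.univ : Set (Fin k))) =
        ⋃ j ∈ (Finset.univ : Finset (Fin k)), B ×ˢ ({j} : Set (Fin k)) := by
      ext ⟨x, i⟩
      simp only [Set.mem_prod, Set.mem_univ, and_true, Set.mem_iUnion, Set.mem_singleton_iff,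
        Finset.mem_univ, exists_prop, true_and]
      exact ⟨fun hx => ⟨i, hx, rfl⟩, by rintro ⟨j, hj, rfl⟩; exact hj⟩
    have hWU : W (B ×ˢ (Set.univ : Set (Fin k))) = ∑ j, W (B ×ˢ ({j} : Set (Fin k))) := by
      rw [hU, measure_biUnion_finset]
      · intro i _ j _ hij
        refine Set.disjoint_left.2 ?_
        rintro ⟨x, l⟩ ⟨_, hl1⟩ ⟨_, hl2⟩
        simp only [Set.mem_singleton_iff] at hl1 hl2
        exact hij (by rw [← hl1, ← hl2])
      · exact fun j _ => hB.prod (measurableSet_singleton j)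
    have hBu : W (B ×ˢ (Set.univ : Set (Fin k))) = P B := by
      rw [Set.prod_univ, ← Measure.map_apply measurable_fst hB, hWfst]
    rw [← hWU, hBu]
  set F : ℝ → ℝ≥0∞ := fun x => ∑ j, (μ j).rnDeriv P x with hFdef
  have hFmeas : Measurable F :=
    Finset.measurable_sum _ fun j _ => Measure.measurable_rnDeriv _ _
  have hPF : P.withDensity F = P := by
    ext B hB
    rw [withDensity_apply _ hB, hFdef]
    rw [lintegral_finset_sum _ fun j _ => Measure.measurable_rnDeriv _ _]
    have hs : ∀ j : Fin k, ∫⁻ x in B, (μ j).rnDeriv P x ∂P = μ j B := by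
      intro j
      haveI := h1 j
      exact Measure.setLIntegral_rnDeriv (hμP j) B
    rw [Finset.sum_congr rfl fun j _ => hs j,
      Finset.sum_congr rfl fun j _ => hμ_apply j B hB]
    exact hsum_meas B hB
  have hF1 : F =ᵐ[P] fun _ => (1 : ℝ≥0∞) := by
    have h2 : (P.withDensity F).rnDeriv P =ᵐ[P] F := Measure.rnDeriv_withDensity P hFmeas
    rw [hPF] at h2
    exact h2.symm.trans (Measure.rnDeriv_self P)
  have hlt : ∀ᵐ x ∂P, ∀ j : Fin k, (μ j).rnDeriv P x < ⊤ := by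
    rw [ae_all_iff]
    intro j
    haveI := h1 j
    exact Measure.rnDeriv_lt_top (μ j) P
  set w₀ : ℝ → Fin k → ℝ := fun x j => ((μ j).rnDeriv P x).toReal with hw₀def
  have hsum1 : ∀ᵐ x ∂P, ∑ j, w₀ x j = 1 := by
    filter_upwards [hF1, hlt] with x h1x h2x
    have hx : (∑ j, (μ j).rnDeriv P x) = 1 := h1x
    calc ∑ j, w₀ x j = (∑ j, (μ j).rnDeriv P x).toReal :=
          (ENNReal.toReal_sum fun j _ => (h2x j).ne).symm
      _ = 1 := by rw [hx]; simp
  set j0 : Fin k := ⟨0, hk⟩ with hj0def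
  set w : ℝ → Fin k → ℝ :=
    fun x => if ∑ j, w₀ x j = 1 then w₀ x else fun j => if j = j0 then 1 else 0 with hwdef
  have hw0meas : ∀ j : Fin k, Measurable fun x => w₀ x j :=
    fun j => (Measure.measurable_rnDeriv _ _).ennreal_toReal
  have hcond : MeasurableSet {x : ℝ | ∑ j, w₀ x j = 1} := by
    have : Measurable fun x => ∑ j, w₀ x j := Finset.measurable_sum _ fun j _ => hw0meas j
    exact this (measurableSet_singleton 1)
  have hwmeas : Measurable w := by
    apply measurable_pi_lambda
    intro j
    have heq : (fun x => w x j) =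
        fun x => if ∑ i, w₀ x i = 1 then w₀ x j else if j = j0 then 1 else 0 := by
      funext x
      by_cases h : ∑ i, w₀ x i = 1 <;> simp [hwdef, h]
    rw [heq]
    exact Measurable.ite hcond (hw0meas j) measurable_const
  have hwnn : ∀ x j, 0 ≤ w x j := by
    intro x j
    by_cases h : ∑ i, w₀ x i = 1
    · simp only [hwdef, if_pos h]
      exact ENNReal.toReal_nonneg
    · simp only [hwdef, if_neg h]
      split <;> norm_num
  have hwsum : ∀ x, ∑ j, w x j = 1 := by
    intro x
    by_cases h : ∑ i, w₀ x i = 1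
    · simp only [hwdef, if_pos h]
      exact h
    · simp only [hwdef, if_neg h]
      rw [Finset.sum_ite_eq' Finset.univ j0 (fun _ => (1 : ℝ))]
      simp
  have hwae : ∀ᵐ x ∂P, ∀ j, w x j = w₀ x j := by
    filter_upwards [hsum1] with x hx
    intro j
    simp only [hwdef, if_pos hx]
  refine ⟨w, hwmeas, hwnn, hwsum, ?_⟩
  refine ext_prod_fin _ _ fun j B hB => ?_
  rw [← hμ_apply j B hB, mkW_rect j hB, withDensity_apply _ hB]
  haveI := h1 j
  rw [← Measure.setLIntegral_rnDeriv (hμP j) B]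
  refine lintegral_congr_ae (ae_restrict_of_ae ?_)
  filter_upwards [hwae, hlt] with x h1x h2x
  rw [h1x j, hw₀def]
  exact (ENNReal.ofReal_toReal (h2x j).ne).symm

end RateDistortionAux

/-- **Proposition 1(i).** For every pmf `Q` and `D ≥ 0`, the infimum of
`I_W(X;Y) + H(W_Y‖Q)` over joint probability measures `W` on `A × Â` with
first marginal `P` and `∫ ρ dW ≤ D` equals `R(P,Q,D)`, the corresponding
infimum over Markov kernels. -/
theorem stmt_10 {k : ℕ} (hk : 0 < k) (A : Set ℝ) (hA : MeasurableSet A)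
    (P : Measure ℝ) [IsProbabilityMeasure P] (hsupp : P Aᶜ = 0)
    (M : ℝ) (ρ : ℝ → Fin k → ℝ) (hρmeas : ∀ j, Measurable fun x => ρ x j)
    (hρnn : ∀ x ∈ A, ∀ j, 0 ≤ ρ x j) (hρM : ∀ x ∈ A, ∀ j, ρ x j ≤ M)
    (hρmin : ∀ x ∈ A, ∃ j, ρ x j = 0)
    (Q : Fin k → ℝ) (hQ : IsPmf Q) (D : ℝ) (hD : 0 ≤ D) :
    (⨅ W ∈ {W : Measure (ℝ × Fin k) | IsProbabilityMeasure W ∧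
        W.map Prod.fst = P ∧ ∫ p, ρ p.1 p.2 ∂W ≤ D},
      mutInfo W + margRelEnt W Q) = RPQ P ρ Q D := by
  have hae_A : ∀ᵐ x ∂P, x ∈ A := by
    rw [ae_iff]
    exact hsupp
  have hρg_meas : Measurable fun p : ℝ × Fin k => ρ p.1 p.2 :=
    measurable_from_prod_countable_left fun j => hρmeas j
  have hρint : ∀ (w : ℝ → Fin k → ℝ), Measurable w → (∀ x j, 0 ≤ w x j) →
      (∀ x, ∑ j, w x j = 1) → ∀ j, Integrable (fun x => w x j * ρ x j) P := by
    intro w hw hnn hsum j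
    refine Integrable.mono' (integrable_const (max M 0))
      ((wj_meas hw j).mul (hρmeas j)).aestronglyMeasurable ?_
    filter_upwards [hae_A] with x hx
    rw [Real.norm_eq_abs, abs_of_nonneg (mul_nonneg (hnn x j) (hρnn x hx j))]
    calc w x j * ρ x j ≤ 1 * M :=
          mul_le_mul (w_le_one hnn hsum x j) (hρM x hx j) (hρnn x hx j) zero_le_one
      _ = M := one_mul M
      _ ≤ max M 0 := le_max_left _ _
  have hdist : ∀ (w : ℝ → Fin k → ℝ), Measurable w → (∀ x j, 0 ≤ w x j) →
      (∀ x, ∑ j, w x j = 1) →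
      ∫ p, ρ p.1 p.2 ∂(mkW P w) = ∫ x, ∑ j, w x j * ρ x j ∂P := by
    intro w hw hnn hsum
    rw [integral_mkW hw hnn hsum _ hρg_meas (hρint w hw hnn hsum),
      integral_finset_sum _ fun j _ => hρint w hw hnn hsum j]
  apply le_antisymm
  · simp only [RPQ]
    refine le_iInf₂ fun w hw => ?_
    obtain ⟨hwm, hwnn, hwsum, hwD⟩ := hw
    have hmem : mkW P w ∈ {W : Measure (ℝ × Fin k) | IsProbabilityMeasure W ∧
        W.map Prod.fst = P ∧ ∫ p, ρ p.1 p.2 ∂W ≤ D} := by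
      refine ⟨mkW_prob hwm hwnn hwsum, mkW_fst hwm hwnn hwsum, ?_⟩
      rw [hdist w hwm hwnn hwsum]
      exact hwD
    calc (⨅ W ∈ {W : Measure (ℝ × Fin k) | IsProbabilityMeasure W ∧
            W.map Prod.fst = P ∧ ∫ p, ρ p.1 p.2 ∂W ≤ D},
          mutInfo W + margRelEnt W Q)
        ≤ mutInfo (mkW P w) + margRelEnt (mkW P w) Q := iInf₂_le _ hmem
      _ = wCost P Q w := value_eq hwm hwnn hwsum hQ.1
  · refine le_iInf₂ fun W hW => ?_
    obtain ⟨hWp, hWfst, hWD⟩ := hW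
    haveI := hWp
    obtain ⟨w, hwm, hwnn, hwsum, hWeq⟩ := exists_kernel hk P W hWfst
    have hmemw : w ∈ {w : ℝ → Fin k → ℝ | Measurable w ∧ (∀ x j, 0 ≤ w x j) ∧
        (∀ x, ∑ j, w x j = 1) ∧ ∫ x, ∑ j, w x j * ρ x j ∂P ≤ D} := by
      refine ⟨hwm, hwnn, hwsum, ?_⟩
      rw [← hdist w hwm hwnn hwsum, ← hWeq]
      exact hWD
    calc RPQ P ρ Q D ≤ wCost P Q w := by
          simp only [RPQ]
          exact iInf₂_le _ hmemw
      _ = mutInfo (mkW P w) + margRelEnt (mkW P w) Q := (value_eq hwm hwnn hwsum hQ.1).symm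
      _ = mutInfo W + margRelEnt W Q := by rw [← hWeq]
end

section
/- Let D_n be a sequence in (0, D_max) with D_n → 0, and for each n let Q_n be a probability mass function on Â and λ_n < 0 a real with Λ'_{P,Q_n}(λ_n) = D_n. Then λ_n → −∞ as n → ∞. (In other words, the conjugate slope λ* in the variational representation of R(D) tends to −∞ as D → 0.) -/
open Real MeasureTheory Finset
open scoped Classical

/-- **Equation (8).** If `D_n ∈ (0, D_max)`, `D_n → 0`, and `λ_n < 0` satisfies
`Λ'_{P,Q_n}(λ_n) = D_n` for pmfs `Q_n`, then `λ_n → −∞`. -/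
theorem stmt_14 {k : ℕ} (hk : 0 < k) (A : Set ℝ) (hA : MeasurableSet A)
    (P : Measure ℝ) [IsProbabilityMeasure P] (hsupp : P Aᶜ = 0)
    (M : ℝ) (ρ : ℝ → Fin k → ℝ) (hρmeas : ∀ j, Measurable fun x => ρ x j)
    (hρnn : ∀ x ∈ A, ∀ j, 0 ≤ ρ x j) (hρM : ∀ x ∈ A, ∀ j, ρ x j ≤ M)
    (hρmin : ∀ x ∈ A, ∃ j, ρ x j = 0)
    (hDmax : 0 < Dmax P ρ)
    (Dseq : ℕ → ℝ) (hDseq : ∀ n, Dseq n ∈ Set.Ioo 0 (Dmax P ρ))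
    (hDlim : Filter.Tendsto Dseq Filter.atTop (nhds 0))
    (Qseq : ℕ → Fin k → ℝ) (hQseq : ∀ n, IsPmf (Qseq n))
    (lseq : ℕ → ℝ) (hlneg : ∀ n, lseq n < 0)
    (hderiv : ∀ n, HasDerivAt (Lam P ρ (Qseq n)) (Dseq n) (lseq n)) :
    Filter.Tendsto lseq Filter.atTop Filter.atBot := by
  haveI : Nonempty (Fin k) := ⟨⟨0, hk⟩⟩
  set DM := Dmax P ρ with hDM
  have hae : ∀ᵐ x ∂P, x ∈ A := by
    rw [ae_iff]
    exact hsupp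
  have hDle : ∀ j, DM ≤ ∫ x, ρ x j ∂P := fun j =>
    csInf_le (Set.finite_range _).bddBelow (Set.mem_range_self j)
  -- M > 0
  have hMpos : 0 < M := by
    by_contra h
    push_neg at h
    have hzero : ∀ j, ∫ x, ρ x j ∂P = 0 := by
      intro j
      have hz : (fun x => ρ x j) =ᵐ[P] (fun _ => (0 : ℝ)) :=
        hae.mono fun x hx => le_antisymm ((hρM x hx j).trans h) (hρnn x hx j)
      rw [integral_congr_ae hz, integral_const, smul_zero]
    have h0 := hDle ⟨0, hk⟩
    rw [hzero] at h0
    linarith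
  -- integrability of ρ · j
  have hρint : ∀ j, Integrable (fun x => ρ x j) P := by
    intro j
    refine Integrable.mono' (integrable_const M) (hρmeas j).aestronglyMeasurable ?_
    exact hae.mono fun x hx => by
      rw [Real.norm_eq_abs, abs_le]
      exact ⟨by linarith [hρnn x hx j], hρM x hx j⟩
  -- the key bound
  have key : ∀ n, Real.exp (lseq n * M) * DM ≤ Dseq n := by
    intro n
    obtain ⟨hQnn, hQsum⟩ := hQseq n
    set Q := Qseq n with hQ
    set l := lseq n with hl
    have hlneg' : l < 0 := hlneg n
    have hQpos : ∃ j, 0 < Q j := by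
      by_contra h
      push_neg at h
      have : ∑ j, Q j = 0 := Finset.sum_eq_zero fun j _ => le_antisymm (h j) (hQnn j)
      rw [hQsum] at this
      norm_num at this
    set g : ℝ → ℝ → ℝ := fun t x => ∑ j, Q j * Real.exp (t * ρ x j) with hg
    set num : ℝ → ℝ → ℝ := fun t x => ∑ j, Q j * (ρ x j * Real.exp (t * ρ x j)) with hnum
    have hgpos : ∀ t x, 0 < g t x := by
      intro t x
      obtain ⟨j0, hj0⟩ := hQpos
      exact Finset.sum_pos' (fun j _ => mul_nonneg (hQnn j) (exp_pos _).le)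
        ⟨j0, Finset.mem_univ _, mul_pos hj0 (exp_pos _)⟩
    have hgderiv : ∀ t x, HasDerivAt (fun t => g t x) (num t x) t := by
      intro t x
      refine HasDerivAt.fun_sum fun j _ => ?_
      have h1 : HasDerivAt (fun t : ℝ => t * ρ x j) (ρ x j) t := hasDerivAt_mul_const _
      have h2 := h1.exp
      have h3 := h2.const_mul (Q j)
      exact h3.congr_deriv (by ring)
    have hFderiv : ∀ t x, HasDerivAt (fun t => Real.log (g t x)) (num t x / g t x) t :=
      fun t x => (hgderiv t x).log (hgpos t x).ne'
    -- bounds for x ∈ A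
    have hnum_nonneg : ∀ t : ℝ, ∀ x ∈ A, 0 ≤ num t x := fun t x hx =>
      Finset.sum_nonneg fun j _ =>
        mul_nonneg (hQnn j) (mul_nonneg (hρnn x hx j) (exp_pos _).le)
    have hratio_ub : ∀ t : ℝ, ∀ x ∈ A, num t x / g t x ≤ M := by
      intro t x hx
      rw [div_le_iff₀ (hgpos t x)]
      calc num t x ≤ ∑ j, Q j * (M * Real.exp (t * ρ x j)) :=
            Finset.sum_le_sum fun j _ => by
              have := mul_le_mul_of_nonneg_right (hρM x hx j) (exp_pos (t * ρ x j)).le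
              exact mul_le_mul_of_nonneg_left this (hQnn j)
        _ = M * g t x := by
            rw [hg, Finset.mul_sum]
            exact Finset.sum_congr rfl fun j _ => by ring
    have hg_le_one : ∀ x ∈ A, g l x ≤ 1 := by
      intro x hx
      calc g l x ≤ ∑ j, Q j * 1 := Finset.sum_le_sum fun j _ =>
            mul_le_mul_of_nonneg_left
              (Real.exp_le_one_iff.2 (mul_nonpos_of_nonpos_of_nonneg hlneg'.le (hρnn x hx j)))
              (hQnn j)
        _ = 1 := by simp [hQsum]
    have hratio_lb : ∀ x ∈ A,
        Real.exp (l * M) * (∑ j, Q j * ρ x j) ≤ num l x / g l x := by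
      intro x hx
      have h1 : Real.exp (l * M) * (∑ j, Q j * ρ x j) ≤ num l x := by
        rw [Finset.mul_sum]
        refine Finset.sum_le_sum fun j _ => ?_
        have he : Real.exp (l * M) ≤ Real.exp (l * ρ x j) :=
          Real.exp_le_exp.2 (mul_le_mul_of_nonpos_left (hρM x hx j) hlneg'.le)
        calc Real.exp (l * M) * (Q j * ρ x j)
            ≤ Real.exp (l * ρ x j) * (Q j * ρ x j) :=
              mul_le_mul_of_nonneg_right he (mul_nonneg (hQnn j) (hρnn x hx j))
          _ = Q j * (ρ x j * Real.exp (l * ρ x j)) := by ring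
      have h2 : num l x ≤ num l x / g l x := by
        rw [le_div_iff₀ (hgpos l x)]
        exact mul_le_of_le_one_right (hnum_nonneg l x hx) (hg_le_one x hx)
      linarith
    -- measurability
    have hgmeas : ∀ t : ℝ, Measurable fun x => g t x := fun t =>
      Finset.measurable_sum _ fun j _ =>
        (((hρmeas j).const_mul t).exp).const_mul (Q j)
    have hnummeas : Measurable fun x => num l x :=
      Finset.measurable_sum _ fun j _ =>
        ((hρmeas j).mul ((hρmeas j).const_mul l).exp).const_mul (Q j)
    -- lipschitz
    have hlip : ∀ᵐ x ∂P, LipschitzOnWith (Real.nnabs M)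
        (fun t => Real.log (g t x)) (Metric.ball l 1) := by
      refine hae.mono fun x hx => ?_
      refine (convex_ball l 1).lipschitzOnWith_of_nnnorm_hasDerivWithin_le
        (f' := fun t => num t x / g t x)
        (fun t _ => (hFderiv t x).hasDerivWithinAt) (fun t _ => ?_)
      rw [← NNReal.coe_le_coe, coe_nnnorm, Real.coe_nnabs, Real.norm_eq_abs]
      rw [abs_of_nonneg (div_nonneg (hnum_nonneg t x hx) (hgpos t x).le)]
      exact (hratio_ub t x hx).trans (le_abs_self M)
    -- integrability of F at l
    have hFint : Integrable (fun x => Real.log (g l x)) P := by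
      refine Integrable.mono' (integrable_const (|l| * M))
        ((hgmeas l).log).aestronglyMeasurable ?_
      refine hae.mono fun x hx => ?_
      have hub : Real.log (g l x) ≤ 0 := Real.log_nonpos (hgpos l x).le (hg_le_one x hx)
      have hlb : l * M ≤ Real.log (g l x) := by
        have : Real.exp (l * M) ≤ g l x := by
          calc Real.exp (l * M) = ∑ j, Q j * Real.exp (l * M) := by
                rw [← Finset.sum_mul, hQsum, one_mul]
            _ ≤ g l x := Finset.sum_le_sum fun j _ =>
                mul_le_mul_of_nonneg_left
                  (Real.exp_le_exp.2 (mul_le_mul_of_nonpos_left (hρM x hx j) hlneg'.le))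
                  (hQnn j)
        calc l * M = Real.log (Real.exp (l * M)) := (Real.log_exp _).symm
          _ ≤ Real.log (g l x) := Real.log_le_log (exp_pos _) this
      rw [Real.norm_eq_abs, abs_le]
      constructor
      · calc -(|l| * M) = l * M := by rw [abs_of_neg hlneg']; ring
          _ ≤ _ := hlb
      · calc Real.log (g l x) ≤ 0 := hub
          _ ≤ |l| * M := mul_nonneg (abs_nonneg _) hMpos.le
    -- differentiation under the integral
    obtain ⟨hF'int, hD⟩ := hasDerivAt_integral_of_dominated_loc_of_lip
      (F := fun t x => Real.log (g t x)) (F' := fun x => num l x / g l x)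
      (bound := fun _ => M) (Metric.ball_mem_nhds l one_pos)
      (Filter.Eventually.of_forall fun t => ((hgmeas t).log).aestronglyMeasurable)
      hFint ((hnummeas.div (hgmeas l)).aestronglyMeasurable) hlip
      (integrable_const M) (Filter.Eventually.of_forall fun x => hFderiv l x)
    have hEq : Dseq n = ∫ x, num l x / g l x ∂P := (hderiv n).unique hD
    -- lower bound on the integral
    have hWint : Integrable (fun x => Real.exp (l * M) * ∑ j, Q j * ρ x j) P := by
      refine Integrable.const_mul ?_ _
      exact integrable_finset_sum _ fun j _ => (hρint j).const_mul _
    have hIle : ∫ x, Real.exp (l * M) * ∑ j, Q j * ρ x j ∂P ≤ ∫ x, num l x / g l x ∂P :=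
      integral_mono_ae hWint hF'int (hae.mono hratio_lb)
    have hIeq : ∫ x, Real.exp (l * M) * ∑ j, Q j * ρ x j ∂P
        = Real.exp (l * M) * ∑ j, Q j * ∫ x, ρ x j ∂P := by
      rw [integral_const_mul]
      congr 1
      rw [integral_finset_sum _ fun j _ => (hρint j).const_mul _]
      exact Finset.sum_congr rfl fun j _ => integral_const_mul _ _
    have hsum_ge : DM ≤ ∑ j, Q j * ∫ x, ρ x j ∂P := by
      calc DM = ∑ j, Q j * DM := by rw [← Finset.sum_mul, hQsum, one_mul]
        _ ≤ ∑ j, Q j * ∫ x, ρ x j ∂P :=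
          Finset.sum_le_sum fun j _ => mul_le_mul_of_nonneg_left (hDle j) (hQnn j)
    calc Real.exp (l * M) * DM ≤ Real.exp (l * M) * ∑ j, Q j * ∫ x, ρ x j ∂P :=
          mul_le_mul_of_nonneg_left hsum_ge (exp_pos _).le
      _ = ∫ x, Real.exp (l * M) * ∑ j, Q j * ρ x j ∂P := hIeq.symm
      _ ≤ ∫ x, num l x / g l x ∂P := hIle
      _ = Dseq n := hEq.symm
  -- conclude
  have hlb : ∀ n, lseq n ≤ Real.log (Dseq n / DM) / M := by
    intro n
    have hD' : 0 < Dseq n / DM := div_pos (hDseq n).1 hDmax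
    have : Real.exp (lseq n * M) ≤ Dseq n / DM := by
      rw [le_div_iff₀ hDmax]
      exact key n
    have h2 : lseq n * M ≤ Real.log (Dseq n / DM) := (Real.le_log_iff_exp_le hD').2 this
    exact (le_div_iff₀ hMpos).2 h2
  refine Filter.tendsto_atBot_mono hlb ?_
  refine Filter.Tendsto.atBot_div_const hMpos ?_
  refine Real.tendsto_log_nhdsGT_zero.comp ?_
  refine tendsto_nhdsWithin_of_tendsto_nhds_of_eventually_within _ ?_
    (Filter.Eventually.of_forall fun n => div_pos (hDseq n).1 hDmax)
  simpa using hDlim.div_const DM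
end
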